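/- arXiv:1101.2914 — 6 statements merged into one kernel-verified Lean document; each statement's English description precedes it below -/
import Mathlib

section
/- Elementary path deformation: let (ω_p)_{p=0}^N be a path from ν to μ and let j ∈ {2,…,N} be an index with Ch(j) < Ch(j−1). Then the weight θ := ω_{j−2} + ε_{Ch(j)} is dominant integral, and the sequence obtained from (ω_p) by replacing ω_{j−1} with θ is again a path from ν to μ. -/
/-- A weight `λ ∈ ℤ^n` is dominant integral if `λ_1 ≥ λ_2 ≥ … ≥ λ_n ≥ 0`. -/
def DomInt {n : ℕ} (lam : Fin n → ℤ) : Prop :=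
  Antitone lam ∧ ∀ i, 0 ≤ lam i

/-- A path from `ν` to `μ`: a finite sequence `(λ_p)_{p=0}^N` of dominant
integral weights with `λ_0 = ν`, `λ_N = μ`, and `λ_p = λ_{p-1} + ε_{Ch(p)}`
for each `p ∈ {1,…,N}`, where `ε_i` is the `i`-th standard basis vector. -/
structure WPath (n : ℕ) (ν μ : Fin n → ℤ) where
  N : ℕ
  seq : ℕ → Fin n → ℤ
  ch : ℕ → Fin n
  first : seq 0 = ν
  last : seq N = μ
  dom : ∀ p, p ≤ N → DomInt (seq p)
  step : ∀ p, 1 ≤ p → p ≤ N → seq p = seq (p - 1) + Pi.single (ch p) 1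

/-- Elementary path deformation: if `(ω_p)_{p=0}^N` is a path from `ν` to `μ`
and `j ∈ {2,…,N}` satisfies `Ch(j) < Ch(j-1)`, then
`θ := ω_{j-2} + ε_{Ch(j)}` is dominant integral, and replacing `ω_{j-1}` by
`θ` yields again a path from `ν` to `μ`. -/
theorem path_deformation {n : ℕ} (hn : 1 ≤ n) (ν μ : Fin n → ℤ)
    (hν : DomInt ν) (hμ : DomInt μ) (hle : ∀ i, ν i ≤ μ i)
    (P : WPath n ν μ) (j : ℕ) (hj2 : 2 ≤ j) (hjN : j ≤ P.N)
    (hch : P.ch j < P.ch (j - 1)) :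
    DomInt (P.seq (j - 2) + Pi.single (P.ch j) 1) ∧
      ∃ P' : WPath n ν μ, P'.N = P.N ∧
        ∀ p, p ≤ P.N →
          P'.seq p =
            Function.update P.seq (j - 1)
              (P.seq (j - 2) + Pi.single (P.ch j) 1) p := by
  have hba : P.ch j ≠ P.ch (j - 1) := ne_of_lt hch
  have hj1N : j - 1 ≤ P.N := by omega
  have hj2N : j - 2 ≤ P.N := by omega
  have h1 : P.seq (j - 1) = P.seq (j - 2) + Pi.single (P.ch (j - 1)) 1 := by
    have h := P.step (j - 1) (by omega) hj1N
    have e : j - 1 - 1 = j - 2 := by omega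
    rwa [e] at h
  have h2 : P.seq j = P.seq (j - 1) + Pi.single (P.ch j) 1 := P.step j (by omega) hjN
  have hωj : P.seq j = P.seq (j - 2) + Pi.single (P.ch (j - 1)) 1 + Pi.single (P.ch j) 1 := by
    rw [h2, h1]
  obtain ⟨hm2, hp2⟩ := P.dom (j - 2) hj2N
  obtain ⟨hmj, hpj⟩ := P.dom j hjN
  have hθ : DomInt (P.seq (j - 2) + Pi.single (P.ch j) 1) := by
    constructor
    · intro i i' hii'
      by_cases hib : i' = P.ch j
      · by_cases hi : i = i'
        · subst hi; exact le_refl _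
        · have hlt : i < i' := lt_of_le_of_ne hii' hi
          have hia : i ≠ P.ch (j - 1) := by
            intro h
            rw [hib] at hlt
            rw [h] at hlt
            exact absurd (lt_trans hlt hch) (lt_irrefl _)
          have hibne : i ≠ P.ch j := fun h => hi (h.trans hib.symm)
          have hkey := hmj hii'
          rw [hωj] at hkey
          simp only [Pi.add_apply, Pi.single_apply, hib, eq_self_iff_true, if_true,
            if_neg hia, if_neg hibne, if_neg (Ne.symm hba)] at hkey ⊢
          omega
      · simp only [Pi.add_apply, Pi.single_apply, if_neg hib]
        have h := hm2 hii'
        split <;> omega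
    · intro i
      simp only [Pi.add_apply, Pi.single_apply]
      have h := hp2 i
      split <;> omega
  refine ⟨hθ, ?_⟩
  have hne01 : (0 : ℕ) ≠ j - 1 := by omega
  have hneN : P.N ≠ j - 1 := by omega
  have hne21 : j - 2 ≠ j - 1 := by omega
  have hnej1 : j ≠ j - 1 := by omega
  refine ⟨⟨P.N, Function.update P.seq (j - 1) (P.seq (j - 2) + Pi.single (P.ch j) 1),
    fun p => if p = j - 1 then P.ch j else if p = j then P.ch (j - 1) else P.ch p,
    ?_, ?_, ?_, ?_⟩, rfl, fun p _ => rfl⟩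
  · rw [Function.update_of_ne hne01, P.first]
  · rw [Function.update_of_ne hneN, P.last]
  · intro p hp
    by_cases h : p = j - 1
    · subst h; rw [Function.update_self]; exact hθ
    · rw [Function.update_of_ne h]; exact P.dom p hp
  · intro p hp1 hpN
    by_cases h : p = j - 1
    · subst h
      have e : j - 1 - 1 = j - 2 := by omega
      simp only [Function.update_self, eq_self_iff_true, if_true]
      rw [e, Function.update_of_ne hne21]
    · by_cases h' : p = j
      · subst h'
        have e2 := hωj
        simp only [Function.update_of_ne hnej1, Function.update_self, if_neg hnej1,
          eq_self_iff_true, if_true]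
        rw [e2, add_right_comm]
      · have h'' : p - 1 ≠ j - 1 := by omega
        simp only [Function.update_of_ne h, if_neg h, if_neg h',
          Function.update_of_ne h'']
        exact P.step p hp1 hpN
end

section
/- Path independence of path operators up to sign: assume the turning relations hold, i.e. for every weight ι ∈ ℤ^n and all indices p ≠ q one has T_{ι+ε_p+ε_q, ι+ε_p} ∘ T_{ι+ε_p, ι} + T_{ι+ε_p+ε_q, ι+ε_q} ∘ T_{ι+ε_q, ι} = 0. Then for any two paths from ν to μ (ν ≼ μ dominant integral), the corresponding path operators V_ν → V_μ agree up to a sign: there exists s ∈ {+1, −1} such that the path operator of the first path equals s times the path operator of the second. -/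
/-- Manhattan distance `|μ,ν| = ∑ i |μ_i - ν_i|` between weights. -/
def mdist {n : ℕ} (μ ν : Fin n → ℤ) : ℤ :=
  ∑ i : Fin n, |μ i - ν i|

section PathOperators

variable {n : ℕ} {V : (Fin n → ℤ) → Type*}
  [∀ lam, AddCommGroup (V lam)] [∀ lam, Module ℂ (V lam)]

/-- Transport along an equality of weights. -/
def lcast {a b : Fin n → ℤ} (h : a = b) : V a →ₗ[ℂ] V b where
  toFun v := h ▸ v
  map_add' := by subst h; intros; rfl
  map_smul' := by subst h; intros; rfl

/-- The composition `T_{λ_N λ_{N-1}} ∘ ⋯ ∘ T_{λ_1 λ_0}` along the initial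
segment of length `N` of a sequence of weights. -/
def pathOpAux (T : ∀ μ lam : Fin n → ℤ, V lam →ₗ[ℂ] V μ)
    (seq : ℕ → Fin n → ℤ) : (N : ℕ) → (V (seq 0) →ₗ[ℂ] V (seq N))
  | 0 => LinearMap.id
  | (N + 1) => (T (seq (N + 1)) (seq N)).comp (pathOpAux T seq N)

/-- The composition `T_{λ_0 λ_1} ∘ ⋯ ∘ T_{λ_{N-1} λ_N}` along the reversed
initial segment of length `N` of a sequence of weights. -/
def revPathOpAux (T : ∀ μ lam : Fin n → ℤ, V lam →ₗ[ℂ] V μ)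
    (seq : ℕ → Fin n → ℤ) : (N : ℕ) → (V (seq N) →ₗ[ℂ] V (seq 0))
  | 0 => LinearMap.id
  | (N + 1) => (revPathOpAux T seq N).comp (T (seq N) (seq (N + 1)))

/-- The path operator `V_ν → V_μ` along a path from `ν` to `μ`. -/
def pathOp (T : ∀ μ lam : Fin n → ℤ, V lam →ₗ[ℂ] V μ) {ν μ : Fin n → ℤ}
    (P : WPath n ν μ) : V ν →ₗ[ℂ] V μ :=
  (lcast (V := V) P.last).comp
    ((pathOpAux T P.seq P.N).comp (lcast (V := V) P.first.symm))

/-- The path operator `V_μ → V_ν` along the reverse of a path from `ν` to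
`μ`. -/
def revPathOp (T : ∀ μ lam : Fin n → ℤ, V lam →ₗ[ℂ] V μ) {ν μ : Fin n → ℤ}
    (P : WPath n ν μ) : V μ →ₗ[ℂ] V ν :=
  (lcast (V := V) P.first).comp
    ((revPathOpAux T P.seq P.N).comp (lcast (V := V) P.last.symm))

end PathOperators

section Aux

open DirectSum

variable {n : ℕ} {V : (Fin n → ℤ) → Type*}
  [∀ lam, AddCommGroup (V lam)] [∀ lam, Module ℂ (V lam)]

/-- The total operator `⨁ A_i` of the step maps in direction `i`. -/
noncomputable def Amap (T : ∀ μ lam : Fin n → ℤ, V lam →ₗ[ℂ] V μ) (i : Fin n) :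
    (⨁ lam, V lam) →ₗ[ℂ] (⨁ lam, V lam) :=
  DirectSum.toModule ℂ _ _ fun lam =>
    (DirectSum.lof ℂ _ V (lam + Pi.single i 1)).comp (T (lam + Pi.single i 1) lam)

lemma Amap_lof (T : ∀ μ lam : Fin n → ℤ, V lam →ₗ[ℂ] V μ) (i : Fin n)
    (lam : Fin n → ℤ) :
    (Amap T i).comp (DirectSum.lof ℂ _ V lam) =
      (DirectSum.lof ℂ _ V (lam + Pi.single i 1)).comp (T (lam + Pi.single i 1) lam) := by
  ext v
  simp [Amap, DirectSum.toModule_lof]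

lemma lof_lcast {a b : Fin n → ℤ} (h : a = b) :
    (DirectSum.lof ℂ _ V b).comp (lcast (V := V) h) = DirectSum.lof ℂ _ V a := by
  subst h; ext v; rfl

lemma Amap_anticomm (T : ∀ μ lam : Fin n → ℤ, V lam →ₗ[ℂ] V μ)
    (hturn : ∀ (ι : Fin n → ℤ) (p q : Fin n), p ≠ q →
      (T (ι + Pi.single p 1 + Pi.single q 1) (ι + Pi.single p 1)).comp
          (T (ι + Pi.single p 1) ι) +
        (T (ι + Pi.single p 1 + Pi.single q 1) (ι + Pi.single q 1)).comp
          (T (ι + Pi.single q 1) ι) = 0)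
    (p q : Fin n) (hpq : p ≠ q) :
    (Amap T p).comp (Amap T q) = - (Amap T q).comp (Amap T p) := by
  refine DirectSum.linearMap_ext ℂ fun lam => ?_
  have hidx : lam + Pi.single q 1 + Pi.single p 1 = lam + Pi.single p 1 + Pi.single q 1 := by
    rw [add_right_comm]
  have h1 : ((Amap T p).comp (Amap T q)).comp (DirectSum.lof ℂ _ V lam)
      = (DirectSum.lof ℂ _ V (lam + Pi.single q 1 + Pi.single p 1)).comp
        ((T (lam + Pi.single q 1 + Pi.single p 1) (lam + Pi.single q 1)).comp
          (T (lam + Pi.single q 1) lam)) := by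
    rw [LinearMap.comp_assoc, Amap_lof, ← LinearMap.comp_assoc, Amap_lof,
      LinearMap.comp_assoc]
  have h2 : ((Amap T q).comp (Amap T p)).comp (DirectSum.lof ℂ _ V lam)
      = (DirectSum.lof ℂ _ V (lam + Pi.single p 1 + Pi.single q 1)).comp
        ((T (lam + Pi.single p 1 + Pi.single q 1) (lam + Pi.single p 1)).comp
          (T (lam + Pi.single p 1) lam)) := by
    rw [LinearMap.comp_assoc, Amap_lof, ← LinearMap.comp_assoc, Amap_lof,
      LinearMap.comp_assoc]
  rw [LinearMap.neg_comp, h1, h2, hidx]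
  have h3 := hturn lam q p (Ne.symm hpq)
  rw [hidx] at h3
  rw [add_eq_zero_iff_eq_neg] at h3
  rw [h3, LinearMap.comp_neg]

/-- Composition of the total step operators along a word (first letter acts
first). -/
noncomputable def wordOp (T : ∀ μ lam : Fin n → ℤ, V lam →ₗ[ℂ] V μ) :
    List (Fin n) → ((⨁ lam, V lam) →ₗ[ℂ] (⨁ lam, V lam))
  | [] => LinearMap.id
  | a :: w => (wordOp T w).comp (Amap T a)

lemma wordOp_append (T : ∀ μ lam : Fin n → ℤ, V lam →ₗ[ℂ] V μ)
    (u w : List (Fin n)) :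
    wordOp T (u ++ w) = (wordOp T w).comp (wordOp T u) := by
  induction u with
  | nil => simp [wordOp]
  | cons a u ih => simp [wordOp, ih, LinearMap.comp_assoc]

lemma wordOp_perm (T : ∀ μ lam : Fin n → ℤ, V lam →ₗ[ℂ] V μ)
    (hturn : ∀ (ι : Fin n → ℤ) (p q : Fin n), p ≠ q →
      (T (ι + Pi.single p 1 + Pi.single q 1) (ι + Pi.single p 1)).comp
          (T (ι + Pi.single p 1) ι) +
        (T (ι + Pi.single p 1 + Pi.single q 1) (ι + Pi.single q 1)).comp
          (T (ι + Pi.single q 1) ι) = 0)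
    {w₁ w₂ : List (Fin n)} (h : w₁.Perm w₂) :
    ∃ s : ℂ, (s = 1 ∨ s = -1) ∧ wordOp T w₁ = s • wordOp T w₂ := by
  induction h with
  | nil => exact ⟨1, Or.inl rfl, by simp⟩
  | cons a h ih =>
    obtain ⟨s, hs, heq⟩ := ih
    exact ⟨s, hs, by simp [wordOp, heq, LinearMap.smul_comp]⟩
  | swap a b l =>
    by_cases hab : a = b
    · subst hab; exact ⟨1, Or.inl rfl, by simp⟩
    · refine ⟨-1, Or.inr rfl, ?_⟩
      have hac := Amap_anticomm T hturn a b hab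
      show (wordOp T (a :: l)).comp (Amap T b)
          = (-1 : ℂ) • ((wordOp T (b :: l)).comp (Amap T a))
      simp only [wordOp, LinearMap.comp_assoc]
      rw [hac, LinearMap.comp_neg]
      exact (neg_one_smul ℂ _).symm
  | trans h₁ h₂ ih₁ ih₂ =>
    obtain ⟨s₁, hs₁, he₁⟩ := ih₁
    obtain ⟨s₂, hs₂, he₂⟩ := ih₂
    refine ⟨s₁ * s₂, ?_, by rw [he₁, he₂, smul_smul]⟩
    rcases hs₁ with h | h <;> rcases hs₂ with h' | h' <;> simp [h, h']

lemma wordOp_pathOpAux (T : ∀ μ lam : Fin n → ℤ, V lam →ₗ[ℂ] V μ)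
    (seq : ℕ → Fin n → ℤ) (ch : ℕ → Fin n) (M : ℕ)
    (hstep : ∀ p, 1 ≤ p → p ≤ M → seq p = seq (p - 1) + Pi.single (ch p) 1) :
    (wordOp T ((List.range M).map fun k => ch (k + 1))).comp
        (DirectSum.lof ℂ _ V (seq 0))
      = (DirectSum.lof ℂ _ V (seq M)).comp (pathOpAux T seq M) := by
  induction M with
  | zero => simp [wordOp, pathOpAux]
  | succ M ih =>
    have ih' := ih fun p h1 h2 => hstep p h1 (by omega)
    have hs := hstep (M + 1) (by omega) (by omega)
    simp only [Nat.add_sub_cancel] at hs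
    rw [List.range_succ, List.map_append, wordOp_append, List.map_cons, List.map_nil]
    rw [LinearMap.comp_assoc, ih', ← LinearMap.comp_assoc]
    show ((LinearMap.id.comp (Amap T (ch (M + 1)))).comp
        (DirectSum.lof ℂ _ V (seq M))).comp (pathOpAux T seq M) = _
    rw [LinearMap.id_comp, Amap_lof]
    show _ = (DirectSum.lof ℂ _ V (seq (M + 1))).comp
      ((T (seq (M + 1)) (seq M)).comp (pathOpAux T seq M))
    rw [hs, LinearMap.comp_assoc]

lemma seq_eq_count (seq : ℕ → Fin n → ℤ) (ch : ℕ → Fin n) (M : ℕ)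
    (hstep : ∀ p, 1 ≤ p → p ≤ M → seq p = seq (p - 1) + Pi.single (ch p) 1) :
    seq M = seq 0 + fun i => (((List.range M).map fun k => ch (k + 1)).count i : ℤ) := by
  induction M with
  | zero =>
    funext i; simp
  | succ M ih =>
    have ih' := ih fun p h1 h2 => hstep p h1 (by omega)
    have hs := hstep (M + 1) (by omega) (by omega)
    simp only [Nat.add_sub_cancel] at hs
    rw [hs, ih']
    funext i
    rw [List.range_succ, List.map_append, List.map_cons, List.map_nil]
    simp [List.count_append, List.count_singleton', Pi.single_apply, add_assoc]
    by_cases hi : i = ch (M + 1) <;> simp [hi, eq_comm]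

end Aux

/-- Path independence of path operators up to sign: if the turning relations
`T_{ι+ε_p+ε_q, ι+ε_p} ∘ T_{ι+ε_p, ι} + T_{ι+ε_p+ε_q, ι+ε_q} ∘ T_{ι+ε_q, ι} = 0`
hold for all `ι` and `p ≠ q`, then any two paths from `ν` to `μ` have path
operators agreeing up to a sign. -/
theorem pathOp_independent_up_to_sign {n : ℕ} (hn : 1 ≤ n)
    {V : (Fin n → ℤ) → Type*} [∀ lam, AddCommGroup (V lam)]
    [∀ lam, Module ℂ (V lam)]
    (T : ∀ μ lam : Fin n → ℤ, V lam →ₗ[ℂ] V μ)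
    (hT0 : ∀ μ lam : Fin n → ℤ, ¬(DomInt μ ∧ DomInt lam) → T μ lam = 0)
    (hturn : ∀ (ι : Fin n → ℤ) (p q : Fin n), p ≠ q →
      (T (ι + Pi.single p 1 + Pi.single q 1) (ι + Pi.single p 1)).comp
          (T (ι + Pi.single p 1) ι) +
        (T (ι + Pi.single p 1 + Pi.single q 1) (ι + Pi.single q 1)).comp
          (T (ι + Pi.single q 1) ι) = 0)
    (ν μ : Fin n → ℤ) (hν : DomInt ν) (hμ : DomInt μ) (hle : ∀ i, ν i ≤ μ i)
    (P₁ P₂ : WPath n ν μ) :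
    ∃ s : ℂ, (s = 1 ∨ s = -1) ∧ pathOp T P₁ = s • pathOp T P₂ := by
  classical
  set w₁ := (List.range P₁.N).map (fun k => P₁.ch (k + 1)) with hw₁
  set w₂ := (List.range P₂.N).map (fun k => P₂.ch (k + 1)) with hw₂
  have hc₁ := seq_eq_count P₁.seq P₁.ch P₁.N P₁.step
  have hc₂ := seq_eq_count P₂.seq P₂.ch P₂.N P₂.step
  rw [P₁.first, P₁.last] at hc₁
  rw [P₂.first, P₂.last] at hc₂
  have hcount : ∀ i : Fin n, w₁.count i = w₂.count i := by
    intro i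
    have h := congrFun (hc₁.symm.trans hc₂) i
    simp only [Pi.add_apply] at h
    exact_mod_cast add_left_cancel h
  have hperm : w₁.Perm w₂ := List.perm_iff_count.mpr hcount
  obtain ⟨s, hs, hw⟩ := wordOp_perm T hturn hperm
  refine ⟨s, hs, ?_⟩
  have k₁ := wordOp_pathOpAux T P₁.seq P₁.ch P₁.N P₁.step
  have k₂ := wordOp_pathOpAux T P₂.seq P₂.ch P₂.N P₂.step
  have e₁ : (DirectSum.lof ℂ _ V μ).comp (pathOp T P₁)
      = (wordOp T w₁).comp (DirectSum.lof ℂ _ V ν) := by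
    unfold pathOp
    rw [← LinearMap.comp_assoc, lof_lcast P₁.last, ← LinearMap.comp_assoc,
      ← k₁, LinearMap.comp_assoc, lof_lcast P₁.first.symm]
  have e₂ : (DirectSum.lof ℂ _ V μ).comp (pathOp T P₂)
      = (wordOp T w₂).comp (DirectSum.lof ℂ _ V ν) := by
    unfold pathOp
    rw [← LinearMap.comp_assoc, lof_lcast P₂.last, ← LinearMap.comp_assoc,
      ← k₂, LinearMap.comp_assoc, lof_lcast P₂.first.symm]
  have key : (DirectSum.lof ℂ _ V μ).comp (pathOp T P₁)
      = (DirectSum.lof ℂ _ V μ).comp (s • pathOp T P₂) := by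
    rw [e₁, hw, LinearMap.smul_comp, ← e₂, LinearMap.comp_smul]
  ext v
  have h := LinearMap.congr_fun key v
  simp only [LinearMap.comp_apply, LinearMap.smul_apply] at h
  rw [← map_smul] at h
  have h3 := DirectSum.of_injective (β := V) μ h
  simpa [map_smul] using h3
end

section
/- If λ and μ are dominant integral weights with λ ≼ μ and λ ∉ B(μ), then there exists an index i ∈ {1,…,n−1} such that λ_i < μ_{i+1} and μ_{i+1} > μ_{i+2} (with the convention μ_{n+1} := 0). -/
/-- The "shifted" weight `(μ_2, μ_3, …, μ_n, 0)`: at position `i` it takes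
the value `μ_{i+1}`, with the convention `μ_{n+1} := 0`. -/
def boxNext {n : ℕ} (μ : Fin n → ℤ) (i : Fin n) : ℤ :=
  if h : (i : ℕ) + 1 < n then μ ⟨(i : ℕ) + 1, h⟩ else 0

/-- The box `B(μ)`: the set of dominant integral weights `λ` with
`μ_i ≥ λ_i ≥ μ_{i+1}` for `1 ≤ i ≤ n-1` and `μ_n ≥ λ_n ≥ 0`. -/
def InBox {n : ℕ} (μ lam : Fin n → ℤ) : Prop :=
  DomInt lam ∧ ∀ i : Fin n, boxNext μ i ≤ lam i ∧ lam i ≤ μ i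

/-- If `λ ≼ μ` are dominant integral and `λ ∉ B(μ)`, then there is an index
`i ∈ {1,…,n-1}` (here `0`-indexed: `i` with `i+1 < n`) such that
`λ_i < μ_{i+1}` and `μ_{i+1} > μ_{i+2}` (convention `μ_{n+1} := 0`). -/
theorem exists_index_of_not_inBox {n : ℕ} (hn : 1 ≤ n) (lam μ : Fin n → ℤ)
    (hlam : DomInt lam) (hμ : DomInt μ) (hle : ∀ i, lam i ≤ μ i)
    (hnot : ¬ InBox μ lam) :
    ∃ (i : ℕ) (hi : i + 1 < n),
      lam ⟨i, Nat.lt_of_succ_lt hi⟩ < μ ⟨i + 1, hi⟩ ∧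
        (if h : i + 2 < n then μ ⟨i + 2, h⟩ else 0) < μ ⟨i + 1, hi⟩ := by
  classical
  obtain ⟨hA, hpos⟩ := hlam
  have hex : ∃ i : Fin n, lam i < boxNext μ i := by
    by_contra h
    push_neg at h
    exact hnot ⟨⟨hA, hpos⟩, fun i => ⟨h i, hle i⟩⟩
  obtain ⟨i, hi⟩ := hex
  have hi1 : (i : ℕ) + 1 < n := by
    by_contra h
    rw [boxNext, dif_neg h] at hi
    exact absurd (hpos i) (not_le.2 hi)
  set P : ℕ → Prop := fun j =>
    ∃ h : j + 1 < n, lam ⟨j, Nat.lt_of_succ_lt h⟩ < μ ⟨j + 1, h⟩ with hP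
  have hPi : P (i : ℕ) := ⟨hi1, by
    rw [boxNext, dif_pos hi1] at hi; exact hi⟩
  set k := Nat.findGreatest P n with hkdef
  have hPk : P k := Nat.findGreatest_spec (le_of_lt (Nat.lt_of_succ_lt hi1)) hPi
  obtain ⟨hk1, hklt⟩ := hPk
  refine ⟨k, hk1, hklt, ?_⟩
  by_cases h2 : k + 2 < n
  · rw [dif_pos h2]
    have hnP : ¬ P (k + 1) :=
      Nat.findGreatest_is_greatest (Nat.lt_succ_self k) (le_of_lt hk1)
    have : ¬ lam ⟨k + 1, Nat.lt_of_succ_lt h2⟩ < μ ⟨k + 2, h2⟩ := by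
      intro hc; exact hnP ⟨h2, hc⟩
    push_neg at this
    have hmono : lam ⟨k + 1, Nat.lt_of_succ_lt h2⟩ ≤ lam ⟨k, Nat.lt_of_succ_lt hk1⟩ :=
      hA (by simp [Fin.le_def])
    exact lt_of_le_of_lt (this.trans hmono) hklt
  · rw [dif_neg h2]
    exact lt_of_le_of_lt (hpos ⟨k, Nat.lt_of_succ_lt hk1⟩) hklt
end

section
/- Let μ be a dominant integral weight, i ∈ {1,…,n−1} an index with μ_{i+1} > μ_{i+2} (convention μ_{n+1} := 0), and λ a dominant integral weight with λ ≼ μ and λ_i < μ_{i+1}. Define λ₋ = (μ_1,…,μ_{i−1}, μ_{i+1}−1, μ_{i+1}−1, μ_{i+2},…,μ_n), λ₀ = (μ_1,…,μ_{i−1}, μ_{i+1}, μ_{i+1}−1, μ_{i+2},…,μ_n), λ₊ = (μ_1,…,μ_{i−1}, μ_{i+1}, μ_{i+1}, μ_{i+2},…,μ_n). Then λ₋, λ₀, λ₊ are all dominant integral, λ ≼ λ₋, λ₊ ≼ μ, λ₀ = λ₋ + ε_i, λ₊ = λ₀ + ε_{i+1}, and moreover λ₀ ∈ B(μ) and λ₊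 ∈ B(μ). -/
/-- The weight `λ₋ = (μ_1,…,μ_{i-1}, μ_{i+1}-1, μ_{i+1}-1, μ_{i+2},…,μ_n)`
(positions `i` and `i+1`, here `0`-indexed, carry the value `μ_{i+1}-1`). -/
def lamMinus {n : ℕ} (μ : Fin n → ℤ) (i : ℕ) (hi : i + 1 < n) : Fin n → ℤ :=
  fun j => if (j : ℕ) = i ∨ (j : ℕ) = i + 1 then μ ⟨i + 1, hi⟩ - 1 else μ j

/-- The weight `λ₀ = (μ_1,…,μ_{i-1}, μ_{i+1}, μ_{i+1}-1, μ_{i+2},…,μ_n)`. -/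
def lamZero {n : ℕ} (μ : Fin n → ℤ) (i : ℕ) (hi : i + 1 < n) : Fin n → ℤ :=
  fun j => if (j : ℕ) = i then μ ⟨i + 1, hi⟩
    else if (j : ℕ) = i + 1 then μ ⟨i + 1, hi⟩ - 1 else μ j

/-- The weight `λ₊ = (μ_1,…,μ_{i-1}, μ_{i+1}, μ_{i+1}, μ_{i+2},…,μ_n)`. -/
def lamPlus {n : ℕ} (μ : Fin n → ℤ) (i : ℕ) (hi : i + 1 < n) : Fin n → ℤ :=
  fun j => if (j : ℕ) = i ∨ (j : ℕ) = i + 1 then μ ⟨i + 1, hi⟩ else μ j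


lemma antitone_succ' {n : ℕ} (f : Fin n → ℤ)
    (h : ∀ k (hk : k + 1 < n), f ⟨k+1, hk⟩ ≤ f ⟨k, Nat.lt_of_succ_lt hk⟩) :
    Antitone f := by
  have key : ∀ b (hb : b < n) a (ha : a < n), a ≤ b → f ⟨b, hb⟩ ≤ f ⟨a, ha⟩ := by
    intro b
    induction b with
    | zero =>
      intro hb a ha hab
      have : a = 0 := by omega
      subst this; exact le_rfl
    | succ b ih =>
      intro hb a ha hab
      rcases Nat.eq_or_lt_of_le hab with heq | hlt'
      · subst heq; exact le_rfl
      · exact le_trans (h b hb) (ih (by omega) a ha (by omega))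
  intro a b hab
  simpa using key b b.2 a a.2 hab

/-- Properties of the weights `λ₋, λ₀, λ₊`: all are dominant integral,
`λ ≼ λ₋`, `λ₊ ≼ μ`, `λ₀ = λ₋ + ε_i`, `λ₊ = λ₀ + ε_{i+1}`, and
`λ₀, λ₊ ∈ B(μ)`. -/
theorem lamMinus_lamZero_lamPlus_props {n : ℕ} (hn : 2 ≤ n)
    (μ : Fin n → ℤ) (hμ : DomInt μ) (i : ℕ) (hi : i + 1 < n)
    (hstrict : (if h : i + 2 < n then μ ⟨i + 2, h⟩ else 0) < μ ⟨i + 1, hi⟩)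
    (lam : Fin n → ℤ) (hlam : DomInt lam) (hle : ∀ j, lam j ≤ μ j)
    (hlt : lam ⟨i, Nat.lt_of_succ_lt hi⟩ < μ ⟨i + 1, hi⟩) :
    DomInt (lamMinus μ i hi) ∧ DomInt (lamZero μ i hi) ∧
      DomInt (lamPlus μ i hi) ∧
      (∀ j, lam j ≤ lamMinus μ i hi j) ∧ (∀ j, lamPlus μ i hi j ≤ μ j) ∧
      lamZero μ i hi =
        lamMinus μ i hi + Pi.single ⟨i, Nat.lt_of_succ_lt hi⟩ 1 ∧
      lamPlus μ i hi = lamZero μ i hi + Pi.single ⟨i + 1, hi⟩ 1 ∧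
      InBox μ (lamZero μ i hi) ∧ InBox μ (lamPlus μ i hi) := by
  have hμle : ∀ (a b : ℕ) (ha : a < n) (hb : b < n), a ≤ b → μ ⟨b, hb⟩ ≤ μ ⟨a, ha⟩ :=
    fun a b ha hb h => hμ.1 (by simpa [Fin.mk_le_mk] using h)
  have hμle' : ∀ (a : Fin n) (b : ℕ) (hb : b < n), (a : ℕ) ≤ b → μ ⟨b, hb⟩ ≤ μ a := by
    intro a b hb h
    exact hμ.1 (by simpa [Fin.le_def] using h)
  have hpos : 0 < μ ⟨i + 1, hi⟩ := by
    by_cases h2 : i + 2 < n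
    · rw [dif_pos h2] at hstrict
      exact lt_of_le_of_lt (hμ.2 _) hstrict
    · rwa [dif_neg h2] at hstrict
  have hlo : ∀ (j : ℕ) (hj : j < n), i + 1 < j → μ ⟨j, hj⟩ < μ ⟨i + 1, hi⟩ := by
    intro j hj hij
    have h2 : i + 2 < n := by omega
    rw [dif_pos h2] at hstrict
    exact lt_of_le_of_lt (hμle (i+2) j h2 hj (by omega)) hstrict
  have hDM : DomInt (lamMinus μ i hi) := by
    constructor
    · apply antitone_succ'
      intro k hk
      simp only [lamMinus]
      split_ifs with h1 h2 h3
      · exact le_rfl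
      · have := hμle k (i+1) (by omega) hi (by omega)
        omega
      · have := hlo (k+1) hk (by omega)
        omega
      · exact hμle k (k+1) (by omega) hk (by omega)
    · intro j
      simp only [lamMinus]
      split_ifs with h1
      · omega
      · exact hμ.2 j
  have hDZ : DomInt (lamZero μ i hi) := by
    constructor
    · apply antitone_succ'
      intro k hk
      simp only [lamZero]
      split_ifs with h1 h2 h3 h4 h5 h6 h7 h8
      all_goals try omega
      · exact hμle k (i+1) (by omega) hi (by omega)
      · have := hlo (k+1) hk (by omega)
        omega
      · exact hμle k (k+1) (by omega) hk (by omega)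
    · intro j
      simp only [lamZero]
      split_ifs with h1 h2
      · omega
      · omega
      · exact hμ.2 j
  have hDP : DomInt (lamPlus μ i hi) := by
    constructor
    · apply antitone_succ'
      intro k hk
      simp only [lamPlus]
      split_ifs with h1 h2 h3
      · exact le_rfl
      · exact hμle k (i+1) (by omega) hi (by omega)
      · exact le_of_lt (hlo (k+1) hk (by omega))
      · exact hμle k (k+1) (by omega) hk (by omega)
    · intro j
      simp only [lamPlus]
      split_ifs with h1
      · omega
      · exact hμ.2 j
  refine ⟨hDM, hDZ, hDP, ?_, ?_, ?_, ?_, ?_, ?_⟩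
  · -- lam ≤ lamMinus
    intro j
    simp only [lamMinus]
    split_ifs with h1
    · rcases h1 with h1 | h1
      · have : lam j = lam ⟨i, Nat.lt_of_succ_lt hi⟩ := by
          congr 1
          exact Fin.ext h1
        omega
      · have hji : (⟨i, Nat.lt_of_succ_lt hi⟩ : Fin n) ≤ j := by
          simp [Fin.le_def, h1]
        have := hlam.1 hji
        omega
    · exact hle j
  · -- lamPlus ≤ μ
    intro j
    simp only [lamPlus]
    split_ifs with h1
    · rcases h1 with h1 | h1
      · exact hμle' j (i+1) hi (by omega)
      · exact hμle' j (i+1) hi (by omega)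
    · exact le_rfl
  · -- lamZero = lamMinus + single i
    funext j
    simp only [lamZero, lamMinus, Pi.add_apply, Pi.single_apply, Fin.ext_iff]
    split_ifs <;> omega
  · -- lamPlus = lamZero + single (i+1)
    funext j
    simp only [lamPlus, lamZero, Pi.add_apply, Pi.single_apply, Fin.ext_iff]
    split_ifs <;> omega
  · -- InBox lamZero
    refine ⟨hDZ, fun j => ⟨?_, ?_⟩⟩
    · simp only [boxNext, lamZero]
      split_ifs with h0 h1 h2
      · exact hμle (i+1) ((j:ℕ)+1) hi h0 (by omega)
      · have := hlo ((j:ℕ)+1) h0 (by omega)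
        omega
      · exact hμle' j ((j:ℕ)+1) h0 (by omega)
      · omega
      · omega
      · exact hμ.2 j
    · simp only [lamZero]
      split_ifs with h1 h2
      · exact hμle' j (i+1) hi (by omega)
      · have := hμle' j (i+1) hi (by omega)
        omega
      · exact le_rfl
  · -- InBox lamPlus
    refine ⟨hDP, fun j => ⟨?_, ?_⟩⟩
    · simp only [boxNext, lamPlus]
      split_ifs with h0 h1
      · rcases h1 with h1 | h1
        · exact hμle (i+1) ((j:ℕ)+1) hi h0 (by omega)
        · exact le_of_lt (hlo ((j:ℕ)+1) h0 (by omega))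
      · exact hμle' j ((j:ℕ)+1) h0 (by omega)
      · omega
      · exact hμ.2 j
    · simp only [lamPlus]
      split_ifs with h1
      · rcases h1 with h1 | h1
        · exact hμle' j (i+1) hi (by omega)
        · exact hμle' j (i+1) hi (by omega)
      · exact le_rfl
end

section
/- Factorization of powers of the Laplace operator (abstract form): assume (a) for every dominant integral λ there are nonzero constants a_λ and constants b_{λ,p} (p = 1,…,n) such that Δ_λ = a_λ R_λ² + Σ_{p=1}^n b_{λ,p} T_{λ, λ−ε_p} ∘ T_{λ−ε_p, λ}; (b) T_{μλ} ∘ R_λ + R_μ ∘ T_{μλ} = 0 whenever |μ,λ| = 1; (c) Δ_μ ∘ T_{μλ} = T_{μλ} ∘ Δ_λ whenever |μ,λ| = 1, and Δ_λ ∘ R_λ = R_λ ∘ Δ_λ for all λ; (d) for every dominant integral λ ≺ μ with λ ∉ B(μ), the path operators P_{μλ} : V_λ → V_μ and P_{λμ} : V_μ → V_λ vanish; (e) path operators between fixed weights are independent of the chosen path. Then for every dominant integral weight μ and every integer n₀ > μ_1 there exist constants c(μ,λ) ∈ ℂ such that Δ_μ^{n₀} = R_μ ∘ [ Σ_{λ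 ∈ B(μ)} c(μ,λ) · P_{μλ} ∘ Δ_λ^{ n₀ − |μ,λ| − 1} ∘ P_{λμ} ] ∘ R_μ as linear operators on V_μ. -/
open Classical in
/-- The box `B(μ)` as a finite set of weights. -/
noncomputable def boxFinset {n : ℕ} (μ : Fin n → ℤ) : Finset (Fin n → ℤ) :=
  (Finset.Icc (boxNext μ) μ).filter (fun lam => InBox μ lam)

section A
variable {n : ℕ} {V : (Fin n → ℤ) → Type*}
  [∀ lam, AddCommGroup (V lam)] [∀ lam, Module ℂ (V lam)]

@[simp] lemma lcast_rfl {a : Fin n → ℤ} : (lcast (V := V) (rfl : a = a)) = LinearMap.id := rfl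

lemma lcast_lcast {a b c : Fin n → ℤ} (h1 : a = b) (h2 : b = c) :
    (lcast (V := V) h2).comp (lcast (V := V) h1) = lcast (V := V) (h1.trans h2) := by
  subst h1; subst h2; rfl

lemma lcast_cancel {a b : Fin n → ℤ} (h : a = b) :
    (lcast (V := V) h).comp (lcast (V := V) h.symm) = LinearMap.id := by
  subst h; rfl

variable (T : ∀ μ lam : Fin n → ℤ, V lam →ₗ[ℂ] V μ)

lemma T_congr {a a' b b' : Fin n → ℤ} (ha : a = a') (hb : b = b') :
    (T a' b').comp (lcast (V := V) hb) = (lcast (V := V) ha).comp (T a b) := by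
  subst ha; subst hb
  ext v; rfl

lemma T_congr' {a a' b b' : Fin n → ℤ} (hb : b = b') (ha : a = a') :
    (lcast (V := V) hb.symm).comp (T b' a') = (T b a).comp (lcast (V := V) ha.symm) := by
  subst ha; subst hb
  ext v; rfl

lemma pathOpAux_congr (s₁ s₂ : ℕ → Fin n → ℤ) (N : ℕ) (h : ∀ k, k ≤ N → s₁ k = s₂ k) :
    pathOpAux T s₂ N = ((lcast (V := V) (h N le_rfl)).comp (pathOpAux T s₁ N)).comp
      (lcast (V := V) (h 0 (Nat.zero_le _)).symm) := by
  induction N with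
  | zero =>
      rw [pathOpAux, pathOpAux, LinearMap.comp_id, lcast_cancel]
  | succ N ih =>
      have hN : ∀ k, k ≤ N → s₁ k = s₂ k := fun k hk => h k (hk.trans (Nat.le_succ N))
      rw [pathOpAux, pathOpAux, ih hN, ← LinearMap.comp_assoc, ← LinearMap.comp_assoc,
        ← LinearMap.comp_assoc, T_congr T (h (N+1) le_rfl) (hN N le_rfl)]

lemma revPathOpAux_congr (s₁ s₂ : ℕ → Fin n → ℤ) (N : ℕ) (h : ∀ k, k ≤ N → s₁ k = s₂ k) :
    revPathOpAux T s₂ N = ((lcast (V := V) (h 0 (Nat.zero_le _))).comp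
      (revPathOpAux T s₁ N)).comp (lcast (V := V) (h N le_rfl).symm) := by
  induction N with
  | zero =>
      rw [revPathOpAux, revPathOpAux, LinearMap.comp_id, lcast_cancel]
  | succ N ih =>
      have hN : ∀ k, k ≤ N → s₁ k = s₂ k := fun k hk => h k (hk.trans (Nat.le_succ N))
      rw [revPathOpAux, revPathOpAux, ih hN, LinearMap.comp_assoc, LinearMap.comp_assoc,
        LinearMap.comp_assoc, T_congr' T (hN N le_rfl) (h (N+1) le_rfl), LinearMap.comp_assoc]

end A
section B
variable {n : ℕ}

/-- The trivial path at a dominant weight. -/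
def WPath.triv (hn : 0 < n) (ν : Fin n → ℤ) (hν : DomInt ν) : WPath n ν ν where
  N := 0
  seq := fun _ => ν
  ch := fun _ => ⟨0, hn⟩ -- junk; unused
  first := rfl
  last := rfl
  dom := fun _ _ => hν
  step := fun p hp hp' => absurd (hp.trans hp') (by omega)

/-- Extend a path by one more raising step at the top. -/
def WPath.ext {lam ν' ν : Fin n → ℤ} (Q : WPath n lam ν') (p : Fin n)
    (hstep : ν = ν' + Pi.single p 1) (hdom : DomInt ν) : WPath n lam ν where
  N := Q.N + 1
  seq := fun k => if k ≤ Q.N then Q.seq k else ν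
  ch := fun k => if k ≤ Q.N then Q.ch k else p
  first := by simp [Q.first]
  last := by simp
  dom := by
    intro q hq
    by_cases h : q ≤ Q.N
    · simpa [h] using Q.dom q h
    · simpa [h] using hdom
  step := by
    intro q h1 hq
    by_cases h : q ≤ Q.N
    · have h' : q - 1 ≤ Q.N := le_trans (Nat.sub_le q 1) h
      simp only [h, h', if_pos]
      exact Q.step q h1 h
    · have hq' : q = Q.N + 1 := by omega
      subst hq'
      have h' : Q.N + 1 - 1 ≤ Q.N := by omega
      simp only [h, h', if_pos, if_neg, not_false_iff]
      rw [hstep]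
      simp [Q.last]
end B

section C
variable {n : ℕ} {V : (Fin n → ℤ) → Type*}
  [∀ lam, AddCommGroup (V lam)] [∀ lam, Module ℂ (V lam)]
  (T : ∀ μ lam : Fin n → ℤ, V lam →ₗ[ℂ] V μ)

lemma lcast_T_lcast {a a' b b' : Fin n → ℤ} (ha : a' = a) (hb : b = b') :
    (lcast (V := V) ha).comp ((T a' b').comp (lcast (V := V) hb)) = T a b := by
  subst ha; subst hb; ext v; rfl

lemma pathOp_eq_aux {ν μ : Fin n → ℤ} (P : WPath n ν μ) {N : ℕ} (hN : P.N = N)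
    (hl : P.seq N = μ) :
    pathOp T P = (lcast (V := V) hl).comp ((pathOpAux T P.seq N).comp
      (lcast (V := V) P.first.symm)) := by
  cases P; subst hN; rfl

lemma revPathOp_eq_aux {ν μ : Fin n → ℤ} (P : WPath n ν μ) {N : ℕ} (hN : P.N = N)
    (hl : P.seq N = μ) :
    revPathOp T P = (lcast (V := V) P.first).comp ((revPathOpAux T P.seq N).comp
      (lcast (V := V) hl.symm)) := by
  cases P; subst hN; rfl

@[simp] lemma pathOp_triv (hn : 0 < n) (ν : Fin n → ℤ) (hν : DomInt ν) :
    pathOp T (WPath.triv hn ν hν) = LinearMap.id := by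
  rw [pathOp]
  ext v; rfl

@[simp] lemma revPathOp_triv (hn : 0 < n) (ν : Fin n → ℤ) (hν : DomInt ν) :
    revPathOp T (WPath.triv hn ν hν) = LinearMap.id := by
  rw [revPathOp]
  rw [show (WPath.triv hn ν hν).N = 0 from rfl]
  rw [revPathOpAux, LinearMap.id_comp, lcast_cancel]

lemma pathOp_ext {lam ν' ν : Fin n → ℤ} (Q : WPath n lam ν') (p : Fin n)
    (hstep : ν = ν' + Pi.single p 1) (hdom : DomInt ν) :
    pathOp T (Q.ext p hstep hdom) = (T ν ν').comp (pathOp T Q) := by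
  set E := Q.ext p hstep hdom with hE
  have hcongr : ∀ k, k ≤ Q.N → Q.seq k = E.seq k := by
    intro k hk
    simp [hE, WPath.ext, hk]
  have key : pathOpAux T E.seq E.N
      = (T (E.seq (Q.N + 1)) (E.seq Q.N)).comp (pathOpAux T E.seq Q.N) := rfl
  have elast : E.seq (Q.N + 1) = ν := E.last
  have efirst : E.seq 0 = lam := E.first
  rw [pathOp_eq_aux T E (N := Q.N + 1) rfl elast, pathOp,
    show pathOpAux T E.seq (Q.N + 1) = (T (E.seq (Q.N + 1)) (E.seq Q.N)).comp
      (pathOpAux T E.seq Q.N) from rfl, pathOpAux_congr T Q.seq E.seq Q.N hcongr]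
  have hfront : ((lcast (V := V) elast).comp
        (T (E.seq (Q.N + 1)) (E.seq Q.N))).comp (lcast (V := V) (hcongr Q.N le_rfl))
      = (T ν ν').comp (lcast (V := V) Q.last) := by
    rw [LinearMap.comp_assoc, lcast_T_lcast T elast (hcongr Q.N le_rfl),
      T_congr T rfl Q.last, lcast_rfl, LinearMap.id_comp]
  simp only [← LinearMap.comp_assoc]
  rw [hfront]
  rw [LinearMap.comp_assoc (lcast (V := V) efirst.symm)
    (lcast (V := V) (hcongr 0 (Nat.zero_le _)).symm)
    (((T ν ν').comp (lcast (V := V) Q.last)).comp (pathOpAux T Q.seq Q.N))]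
  rw [lcast_lcast (V := V) efirst.symm (hcongr 0 (Nat.zero_le _)).symm]

lemma revPathOp_ext {lam ν' ν : Fin n → ℤ} (Q : WPath n lam ν') (p : Fin n)
    (hstep : ν = ν' + Pi.single p 1) (hdom : DomInt ν) :
    revPathOp T (Q.ext p hstep hdom) = (revPathOp T Q).comp (T ν' ν) := by
  set E := Q.ext p hstep hdom with hE
  have hcongr : ∀ k, k ≤ Q.N → Q.seq k = E.seq k := by
    intro k hk
    simp [hE, WPath.ext, hk]
  have key : revPathOpAux T E.seq E.N
      = (revPathOpAux T E.seq Q.N).comp (T (E.seq Q.N) (E.seq (Q.N + 1))) := rfl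
  have elast : E.seq (Q.N + 1) = ν := E.last
  have efirst : E.seq 0 = lam := E.first
  rw [revPathOp_eq_aux T E (N := Q.N + 1) rfl elast, revPathOp,
    show revPathOpAux T E.seq (Q.N + 1) = (revPathOpAux T E.seq Q.N).comp
      (T (E.seq Q.N) (E.seq (Q.N + 1))) from rfl, revPathOpAux_congr T Q.seq E.seq Q.N hcongr]
  have hback : ((lcast (V := V) (hcongr Q.N le_rfl).symm).comp
        (T (E.seq Q.N) (E.seq (Q.N + 1)))).comp (lcast (V := V) elast.symm)
      = T (Q.seq Q.N) ν := by
    rw [LinearMap.comp_assoc, lcast_T_lcast T (hcongr Q.N le_rfl).symm elast.symm]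
  have hback2 : (lcast (V := V) Q.last.symm).comp (T ν' ν)
      = T (Q.seq Q.N) ν := by
    rw [T_congr' T Q.last (rfl : ν = ν)]
    exact LinearMap.comp_id _
  simp only [← LinearMap.comp_assoc]
  rw [lcast_lcast (V := V) (hcongr 0 (Nat.zero_le _)) efirst]
  rw [LinearMap.comp_assoc (T (E.seq Q.N) (E.seq (Q.N + 1)))
    (lcast (V := V) (hcongr Q.N le_rfl).symm)
    ((lcast (V := V) ((hcongr 0 (Nat.zero_le _)).trans efirst)).comp
      (revPathOpAux T Q.seq Q.N))]
  rw [LinearMap.comp_assoc (lcast (V := V) elast.symm)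
    ((lcast (V := V) (hcongr Q.N le_rfl).symm).comp
      (T (E.seq Q.N) (E.seq (Q.N + 1))))
    ((lcast (V := V) ((hcongr 0 (Nat.zero_le _)).trans efirst)).comp
      (revPathOpAux T Q.seq Q.N))]
  rw [hback]
  rw [LinearMap.comp_assoc (T ν' ν) (lcast (V := V) Q.last.symm)
    ((lcast (V := V) ((hcongr 0 (Nat.zero_le _)).trans efirst)).comp
      (revPathOpAux T Q.seq Q.N))]
  rw [hback2]

end C
section D
variable {n : ℕ}

lemma mdist_self (ν : Fin n → ℤ) : mdist ν ν = 0 := by simp [mdist]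

lemma mdist_nonneg (μ ν : Fin n → ℤ) : 0 ≤ mdist μ ν :=
  Finset.sum_nonneg fun i _ => abs_nonneg _

lemma mdist_comm (μ ν : Fin n → ℤ) : mdist μ ν = mdist ν μ := by
  simp [mdist, abs_sub_comm]

lemma mdist_eq_sum {lam ν : Fin n → ℤ} (h : ∀ i, lam i ≤ ν i) :
    mdist ν lam = ∑ i, (ν i - lam i) :=
  Finset.sum_congr rfl fun i _ => abs_of_nonneg (by linarith [h i])

lemma sum_pi_single_one (p : Fin n) : (∑ i, (Pi.single p 1 : Fin n → ℤ) i) = 1 := by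
  simp [Pi.single_apply]

lemma mdist_sub_single (ν : Fin n → ℤ) (p : Fin n) :
    mdist ν (ν - Pi.single p 1) = 1 := by
  have h2 : ∀ i, |ν i - (ν - Pi.single p 1 : Fin n → ℤ) i| = (Pi.single p 1 : Fin n → ℤ) i := by
    intro i
    have : ν i - (ν - Pi.single p 1 : Fin n → ℤ) i = (Pi.single p 1 : Fin n → ℤ) i := by simp
    rw [this]
    exact abs_of_nonneg (by simp [Pi.single_apply]; split <;> omega)
  rw [mdist, Finset.sum_congr rfl fun i _ => h2 i]
  exact sum_pi_single_one p

lemma mdist_sub_single' (ν : Fin n → ℤ) (p : Fin n) :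
    mdist (ν - Pi.single p 1) ν = 1 := by rw [mdist_comm]; exact mdist_sub_single ν p

lemma mdist_step {lam ν' : Fin n → ℤ} (p : Fin n) (hle : ∀ i, lam i ≤ ν' i) :
    mdist (ν' + Pi.single p 1) lam = mdist ν' lam + 1 := by
  have hle2 : ∀ i, lam i ≤ (ν' + Pi.single p 1 : Fin n → ℤ) i := by
    intro i
    have : (0:ℤ) ≤ (Pi.single p 1 : Fin n → ℤ) i := by simp [Pi.single_apply]; split <;> omega
    have := hle i
    simp only [Pi.add_apply]
    omega
  rw [mdist_eq_sum hle2, mdist_eq_sum hle]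
  have : ∀ i : Fin n, (ν' + Pi.single p 1 : Fin n → ℤ) i - lam i = (ν' i - lam i) + (Pi.single p 1 : Fin n → ℤ) i := by
    intro i; simp only [Pi.add_apply]; ring
  rw [Finset.sum_congr rfl fun i _ => this i, Finset.sum_add_distrib, sum_pi_single_one]

lemma mdist_step_toNat {lam ν' : Fin n → ℤ} (p : Fin n) (hle : ∀ i, lam i ≤ ν' i) :
    (mdist (ν' + Pi.single p 1) lam).toNat = (mdist ν' lam).toNat + 1 := by
  have h1 := mdist_step p hle
  have h2 := mdist_nonneg ν' lam
  omega

lemma boxNext_le {μ : Fin n → ℤ} (hμ : DomInt μ) (i : Fin n) : boxNext μ i ≤ μ i := by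
  unfold boxNext
  split
  · exact hμ.1 (by simp [Fin.le_def])
  · exact hμ.2 i

lemma mem_boxFinset_iff {μ lam : Fin n → ℤ} : lam ∈ boxFinset μ ↔ InBox μ lam := by
  classical
  constructor
  · intro h; exact (Finset.mem_filter.mp h).2
  · intro h
    refine Finset.mem_filter.mpr ⟨Finset.mem_Icc.mpr ⟨?_, ?_⟩, h⟩
    · intro i; exact (h.2 i).1
    · intro i; exact (h.2 i).2

lemma self_mem_boxFinset {μ : Fin n → ℤ} (hμ : DomInt μ) : μ ∈ boxFinset μ :=
  mem_boxFinset_iff.mpr ⟨hμ, fun i => ⟨boxNext_le hμ i, le_rfl⟩⟩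

lemma mdist_le_head (hn : 0 < n) {μ lam : Fin n → ℤ} (hμ : DomInt μ) (h : InBox μ lam) :
    mdist μ lam ≤ μ ⟨0, hn⟩ := by
  set g : ℕ → ℤ := fun k => if hk : k < n then μ ⟨k, hk⟩ else 0 with hg
  have key : ∀ i : Fin n, μ i - boxNext μ i = g i.1 - g (i.1 + 1) := by
    intro i
    have h1 : g i.1 = μ i := by simp [hg, i.isLt]
    have h2 : g (i.1 + 1) = boxNext μ i := by
      by_cases hi : i.1 + 1 < n
      · simp [hg, hi, boxNext]
      · simp [hg, hi, boxNext]
    rw [h1, h2]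
  have hb : mdist μ lam ≤ ∑ i : Fin n, (μ i - boxNext μ i) := by
    rw [mdist_eq_sum fun i => (h.2 i).2]
    exact Finset.sum_le_sum fun i _ => by linarith [(h.2 i).1]
  have ht : ∑ i : Fin n, (μ i - boxNext μ i) = μ ⟨0, hn⟩ := by
    rw [Finset.sum_congr rfl fun i _ => key i]
    rw [Fin.sum_univ_eq_sum_range (fun k => g k - g (k + 1)) n]
    rw [Finset.sum_range_sub' g n]
    simp [hg, hn]
  linarith

lemma exists_path_aux (hn : 0 < n) : ∀ (k : ℕ) (lam ν : Fin n → ℤ),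
    (mdist ν lam).toNat = k → DomInt lam → DomInt ν → (∀ i, lam i ≤ ν i) →
    Nonempty (WPath n lam ν) := by
  intro k
  induction k with
  | zero =>
      intro lam ν hk hlam hν hle
      have h0 : mdist ν lam = 0 := by have := mdist_nonneg ν lam; omega
      have : ∀ i ∈ Finset.univ, ν i - lam i = 0 := by
        rw [mdist_eq_sum hle] at h0
        intro i hi
        exact (Finset.sum_eq_zero_iff_of_nonneg (fun i _ => by linarith [hle i])).mp h0 i hi
      have heq : lam = ν := funext fun i => by
        have := this i (Finset.mem_univ i); omega
      subst heq
      exact ⟨WPath.triv hn lam hlam⟩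
  | succ k ih =>
      intro lam ν hk hlam hν hle
      have hne : lam ≠ ν := by
        intro h; subst h; rw [mdist_self] at hk; omega
      set s := Finset.univ.filter (fun i => lam i < ν i) with hs
      have hsne : s.Nonempty := by
        by_contra hempty
        rw [Finset.not_nonempty_iff_eq_empty] at hempty
        apply hne
        funext i
        have : i ∉ s := by rw [hempty]; exact Finset.notMem_empty i
        simp [hs] at this
        have := hle i
        omega
      set j := s.max' hsne with hj
      have hjs : j ∈ s := Finset.max'_mem s hsne
      have hjlt : lam j < ν j := by simpa [hs] using hjs
      have hgt : ∀ i : Fin n, j < i → lam i = ν i := by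
        intro i hi
        by_contra hne2
        have hilt : lam i < ν i := lt_of_le_of_ne (hle i) hne2
        have : i ∈ s := by simp [hs, hilt]
        have := Finset.le_max' s i this
        rw [← hj] at this
        exact absurd hi (not_lt.mpr this)
      set ν' := ν - Pi.single j 1 with hν'
      have hν'app : ∀ i, ν' i = ν i - (if i = j then 1 else 0) := by
        intro i; simp [hν', Pi.single_apply]
      have hstep : ν = ν' + Pi.single j 1 := by rw [hν']; ring
      have hle' : ∀ i, lam i ≤ ν' i := by
        intro i; rw [hν'app]; split
        · subst ‹i = j›; omega
        · have := hle i; omega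
      have hν'dom : DomInt ν' := by
        constructor
        · intro i i' hii'
          rw [hν'app, hν'app]
          by_cases hi : i = j <;> by_cases hi' : i' = j
          · subst hi; subst hi'; omega
          · subst hi
            have hji' : j < i' := lt_of_le_of_ne hii' (Ne.symm hi')
            have h1 : lam i' = ν i' := hgt i' hji'
            have h2 : lam i' ≤ lam j := hlam.1 (le_of_lt hji')
            simp [hi']
            omega
          · subst hi'
            have := hν.1 hii'
            simp [hi]
            omega
          · simp [hi, hi']
            exact hν.1 hii'
        · intro i
          rw [hν'app]
          split
          · subst ‹i = j›; have := hlam.2 j; omega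
          · have := hν.2 i; omega
      have hk' : (mdist ν' lam).toNat = k := by
        have h1 : mdist ν lam = mdist ν' lam + 1 := by
          rw [hstep]; exact mdist_step j hle'
        have h2 := mdist_nonneg ν' lam
        omega
      obtain ⟨Q⟩ := ih lam ν' hk' hlam hν'dom hle'
      exact ⟨Q.ext j hstep hν⟩

lemma exists_path (hn : 0 < n) {lam ν : Fin n → ℤ} (hlam : DomInt lam) (hν : DomInt ν)
    (hle : ∀ i, lam i ≤ ν i) : Nonempty (WPath n lam ν) :=
  exists_path_aux hn (mdist ν lam).toNat lam ν rfl hlam hν hle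

end D
section E
variable {n : ℕ} {V : (Fin n → ℤ) → Type*}
  [∀ lam, AddCommGroup (V lam)] [∀ lam, Module ℂ (V lam)]

lemma pow_comp_comm {ν : Fin n → ℤ} (Δ R : Module.End ℂ (V ν))
    (h : Δ.comp R = R.comp Δ) (m : ℕ) : (Δ ^ m).comp R = R.comp (Δ ^ m) := by
  induction m with
  | zero => simp [pow_zero]; rfl
  | succ m ih =>
      rw [pow_succ]
      calc (Δ ^ m * Δ).comp R = (Δ ^ m).comp (Δ.comp R) := by
            rw [Module.End.mul_eq_comp, LinearMap.comp_assoc]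
        _ = (Δ ^ m).comp (R.comp Δ) := by rw [h]
        _ = ((Δ ^ m).comp R).comp Δ := by rw [LinearMap.comp_assoc]
        _ = (R.comp (Δ ^ m)).comp Δ := by rw [ih]
        _ = R.comp (Δ ^ m * Δ) := by rw [Module.End.mul_eq_comp, LinearMap.comp_assoc]

lemma pow_comp_T {ν lam : Fin n → ℤ} (Δ₁ : Module.End ℂ (V ν)) (Δ₂ : Module.End ℂ (V lam))
    (T : V lam →ₗ[ℂ] V ν) (h : Δ₁.comp T = T.comp Δ₂) (m : ℕ) :
    (Δ₁ ^ m).comp T = T.comp (Δ₂ ^ m) := by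
  induction m with
  | zero => simp [pow_zero]; rfl
  | succ m ih =>
      rw [pow_succ, pow_succ]
      calc (Δ₁ ^ m * Δ₁).comp T = (Δ₁ ^ m).comp (Δ₁.comp T) := by
            rw [Module.End.mul_eq_comp, LinearMap.comp_assoc]
        _ = (Δ₁ ^ m).comp (T.comp Δ₂) := by rw [h]
        _ = ((Δ₁ ^ m).comp T).comp Δ₂ := by rw [LinearMap.comp_assoc]
        _ = (T.comp (Δ₂ ^ m)).comp Δ₂ := by rw [ih]
        _ = T.comp (Δ₂ ^ m * Δ₂) := by rw [Module.End.mul_eq_comp, LinearMap.comp_assoc]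

variable (T : ∀ μ lam : Fin n → ℤ, V lam →ₗ[ℂ] V μ)

/-- Error terms: spans of `P_{νλ} ∘ P_{λν}` for `λ` dominant, `λ ≤ ν`,
at Manhattan distance exactly `m`. -/
def errSet (ν : Fin n → ℤ) (m : ℕ) : Set (Module.End ℂ (V ν)) :=
  {g | ∃ (lam : Fin n → ℤ) (Q : WPath n lam ν), DomInt lam ∧ (∀ i, lam i ≤ ν i) ∧
    mdist ν lam = (m : ℤ) ∧ g = (pathOp T Q).comp (revPathOp T Q)}

/-- Conjugation by `T` sends error terms at level `m` for `ν - ε_p` to error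
terms at level `m+1` for `ν`. -/
lemma errSet_step {ν' ν : Fin n → ℤ} (p : Fin n) (hstep : ν = ν' + Pi.single p 1)
    (hν : DomInt ν) (m : ℕ) (E : Module.End ℂ (V ν'))
    (hE : E ∈ Submodule.span ℂ (errSet T ν' m)) :
    (T ν ν').comp (E.comp (T ν' ν)) ∈ Submodule.span ℂ (errSet T ν (m + 1)) := by
  let Φ : Module.End ℂ (V ν') →ₗ[ℂ] Module.End ℂ (V ν) :=
    { toFun := fun g => (T ν ν').comp (g.comp (T ν' ν))
      map_add' := by intro g h; ext v; simp
      map_smul' := by intro c g; ext v; simp }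
  have hmem : Φ E ∈ Submodule.map Φ (Submodule.span ℂ (errSet T ν' m)) :=
    ⟨E, hE, rfl⟩
  rw [Submodule.map_span] at hmem
  refine Submodule.span_mono ?_ hmem
  rintro g ⟨g', ⟨lam, Q, hdom, hle, hd, rfl⟩, rfl⟩
  have hle' : ∀ i, lam i ≤ ν i := by
    intro i
    have h1 := hle i
    have : ν i = ν' i + (Pi.single p 1 : Fin n → ℤ) i := by rw [hstep]; rfl
    have : (0:ℤ) ≤ (Pi.single p 1 : Fin n → ℤ) i := by
      simp [Pi.single_apply]; split <;> omega
    omega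
  refine ⟨lam, Q.ext p hstep hν, hdom, hle', ?_, ?_⟩
  · rw [hstep, mdist_step p hle, hd]; push_cast; ring
  · show Φ ((pathOp T Q).comp (revPathOp T Q)) = _
    simp only [Φ, LinearMap.coe_mk, AddHom.coe_mk]
    rw [pathOp_ext T Q p hstep hν, revPathOp_ext T Q p hstep hν]
    simp only [LinearMap.comp_assoc]

end E
section F
variable {n : ℕ} {V : (Fin n → ℤ) → Type*}
  [∀ lam, AddCommGroup (V lam)] [∀ lam, Module ℂ (V lam)]

lemma comp_sum_eq {M₁ M₂ M₃ : Type*} [AddCommGroup M₁] [AddCommGroup M₂] [AddCommGroup M₃]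
    [Module ℂ M₁] [Module ℂ M₂] [Module ℂ M₃] {ι : Type*} (s : Finset ι)
    (g : M₂ →ₗ[ℂ] M₃) (f : ι → (M₁ →ₗ[ℂ] M₂)) :
    g.comp (∑ i ∈ s, f i) = ∑ i ∈ s, g.comp (f i) := by
  ext v; simp

lemma sum_comp_eq {M₁ M₂ M₃ : Type*} [AddCommGroup M₁] [AddCommGroup M₂] [AddCommGroup M₃]
    [Module ℂ M₁] [Module ℂ M₂] [Module ℂ M₃] {ι : Type*} (s : Finset ι)
    (g : M₁ →ₗ[ℂ] M₂) (f : ι → (M₂ →ₗ[ℂ] M₃)) :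
    (∑ i ∈ s, f i).comp g = ∑ i ∈ s, (f i).comp g := by
  ext v; simp

variable (hn : 0 < n) (T : ∀ μ lam : Fin n → ℤ, V lam →ₗ[ℂ] V μ)
  (R : ∀ lam : Fin n → ℤ, Module.End ℂ (V lam))
  (Δ : ∀ lam : Fin n → ℤ, Module.End ℂ (V lam))

lemma stepTerm
    (hT0 : ∀ μ lam : Fin n → ℤ, ¬(DomInt μ ∧ DomInt lam) → T μ lam = 0)
    (hanti : ∀ μ lam : Fin n → ℤ, mdist μ lam = 1 →
      (T μ lam).comp (R lam) + (R μ).comp (T μ lam) = 0)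
    (hvanish : ∀ lam μ : Fin n → ℤ, DomInt lam → DomInt μ →
      (∀ i, lam i ≤ μ i) → lam ≠ μ → ¬ InBox μ lam →
      ∀ P : WPath n lam μ, pathOp T P = 0 ∧ revPathOp T P = 0)
    (hindep : ∀ ν μ : Fin n → ℤ, ∀ P₁ P₂ : WPath n ν μ,
      pathOp T P₁ = pathOp T P₂ ∧ revPathOp T P₁ = revPathOp T P₂)
    (ν : Fin n → ℤ) (hν : DomInt ν) (p : Fin n) (m : ℕ) (β : ℂ)
    (P : (lam : Fin n → ℤ) → lam ∈ boxFinset ν → WPath n lam ν)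
    (IH : DomInt (ν - Pi.single p 1) → ∃ (c' : (Fin n → ℤ) → ℂ)
      (P' : (lam : Fin n → ℤ) → lam ∈ boxFinset (ν - Pi.single p 1) →
        WPath n lam (ν - Pi.single p 1)) (E' : Module.End ℂ (V (ν - Pi.single p 1))),
      E' ∈ Submodule.span ℂ (errSet T (ν - Pi.single p 1) m) ∧
      Δ (ν - Pi.single p 1) ^ m =
        (R (ν - Pi.single p 1)).comp
          ((∑ x ∈ (boxFinset (ν - Pi.single p 1)).attach,
            c' x.1 • ((pathOp T (P' x.1 x.2)).comp
              ((Δ x.1 ^ (m - (mdist (ν - Pi.single p 1) x.1).toNat - 1)).comp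
                (revPathOp T (P' x.1 x.2))))).comp (R (ν - Pi.single p 1))) + E') :
    ∃ (f : (Fin n → ℤ) → ℂ) (E : Module.End ℂ (V ν)),
      E ∈ Submodule.span ℂ (errSet T ν (m + 1)) ∧
      β • ((T ν (ν - Pi.single p 1)).comp
          ((Δ (ν - Pi.single p 1) ^ m).comp (T (ν - Pi.single p 1) ν))) =
        (R ν).comp
          ((∑ x ∈ (boxFinset ν).attach,
            f x.1 • ((pathOp T (P x.1 x.2)).comp
              ((Δ x.1 ^ (m + 1 - (mdist ν x.1).toNat - 1)).comp
                (revPathOp T (P x.1 x.2))))).comp (R ν)) + E := by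
  classical
  set νp : Fin n → ℤ := ν - Pi.single p 1 with hνp
  by_cases hp : DomInt νp
  case neg =>
    refine ⟨0, 0, Submodule.zero_mem _, ?_⟩
    rw [hT0 ν νp (fun hc => hp hc.2)]
    simp
  case pos =>
  obtain ⟨c', P', E', hE', heq⟩ := IH hp
  have hstep : ν = νp + Pi.single p 1 := by rw [hνp]; ring
  have hd1 : mdist ν νp = 1 := mdist_sub_single ν p
  have hd1' : mdist νp ν = 1 := mdist_sub_single' ν p
  have hνple : ∀ i, νp i ≤ ν i := by
    intro i
    have : νp i = ν i - (if i = p then 1 else 0) := by simp [hνp, Pi.single_apply]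
    rw [this]; split <;> omega
  -- error part
  set Enew : Module.End ℂ (V ν) := β • ((T ν νp).comp (E'.comp (T νp ν))) with hEnew
  have hEnewMem : Enew ∈ Submodule.span ℂ (errSet T ν (m + 1)) :=
    Submodule.smul_mem _ _ (errSet_step T p hstep hν m E' hE')
  -- anticommutation
  have hTR : (T ν νp).comp (R νp) = -((R ν).comp (T ν νp)) :=
    eq_neg_of_add_eq_zero_left (hanti ν νp hd1)
  have hRT : (R νp).comp (T νp ν) = -((T νp ν).comp (R ν)) :=
    eq_neg_of_add_eq_zero_right (hanti νp ν hd1')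
  have hTRf : ∀ (f : V ν →ₗ[ℂ] V νp),
      (T ν νp).comp ((R νp).comp f) = -((R ν).comp ((T ν νp).comp f)) := by
    intro f
    rw [← LinearMap.comp_assoc, hTR, LinearMap.neg_comp, LinearMap.comp_assoc]
  -- abbreviation for the inner sum from the induction hypothesis
  set M' : Module.End ℂ (V νp) := ∑ x ∈ (boxFinset νp).attach,
      c' x.1 • ((pathOp T (P' x.1 x.2)).comp
        ((Δ x.1 ^ (m - (mdist νp x.1).toNat - 1)).comp
          (revPathOp T (P' x.1 x.2)))) with hM'
  -- main sign computation
  have hmain : (T ν νp).comp (((R νp).comp (M'.comp (R νp))).comp (T νp ν))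
      = (R ν).comp (((T ν νp).comp (M'.comp (T νp ν))).comp (R ν)) := by
    simp only [LinearMap.comp_assoc]
    rw [hRT]
    simp only [LinearMap.comp_neg]
    rw [hTRf (M'.comp ((T νp ν).comp (R ν)))]
    simp only [neg_neg, LinearMap.comp_assoc]
  -- the function F collecting the middle terms
  set F : (Fin n → ℤ) → Module.End ℂ (V ν) := fun lam =>
    if hmem : lam ∈ boxFinset ν then
      (if lam ∈ boxFinset νp then c' lam else 0) •
        ((pathOp T (P lam hmem)).comp
          ((Δ lam ^ (m + 1 - (mdist ν lam).toNat - 1)).comp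
            (revPathOp T (P lam hmem))))
    else 0 with hF
  have hTMT : (T ν νp).comp (M'.comp (T νp ν)) = ∑ x ∈ (boxFinset νp).attach, F x.1 := by
    rw [hM', sum_comp_eq, comp_sum_eq]
    refine Finset.sum_congr rfl ?_
    rintro x -
    obtain ⟨lam, hx⟩ := x
    have hbox : InBox νp lam := mem_boxFinset_iff.mp hx
    have hlamle' : ∀ i, lam i ≤ νp i := fun i => (hbox.2 i).2
    have hlamle : ∀ i, lam i ≤ ν i := fun i => le_trans (hlamle' i) (hνple i)
    have hlamne : lam ≠ ν := by
      intro hc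
      have h1 := hlamle' p
      have h2 : νp p = ν p - 1 := by simp [hνp]
      rw [hc] at h1
      omega
    have hdtoNat : (mdist ν lam).toNat = (mdist νp lam).toNat + 1 := by
      rw [hstep]; exact mdist_step_toNat p hlamle'
    have hexp : m - (mdist νp lam).toNat - 1 = m + 1 - (mdist ν lam).toNat - 1 := by
      omega
    set Qx : WPath n lam ν := (P' lam hx).ext p hstep hν with hQx
    have hpath : (T ν νp).comp (pathOp T (P' lam hx)) = pathOp T Qx :=
      (pathOp_ext T (P' lam hx) p hstep hν).symm
    have hrev : (revPathOp T (P' lam hx)).comp (T νp ν) = revPathOp T Qx :=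
      (revPathOp_ext T (P' lam hx) p hstep hν).symm
    -- bring the T's inside the smul and compositions
    have lhs_eq : (T ν νp).comp
        ((c' lam • ((pathOp T (P' lam hx)).comp
          ((Δ lam ^ (m - (mdist νp lam).toNat - 1)).comp
            (revPathOp T (P' lam hx))))).comp (T νp ν))
        = c' lam • ((pathOp T Qx).comp
            ((Δ lam ^ (m + 1 - (mdist ν lam).toNat - 1)).comp (revPathOp T Qx))) := by
      rw [LinearMap.smul_comp, LinearMap.comp_smul, hexp]
      rw [← hpath, ← hrev]
      simp only [LinearMap.comp_assoc]
    rw [lhs_eq]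
    by_cases hmem : lam ∈ boxFinset ν
    · have hip := hindep lam ν Qx (P lam hmem)
      rw [hip.1, hip.2]
      simp only [hF]
      rw [dif_pos hmem, if_pos hx]
    · have hv := hvanish lam ν hbox.1 hν hlamle hlamne
        (fun hin => hmem (mem_boxFinset_iff.mpr hin)) Qx
      rw [hv.1]
      simp only [hF]
      rw [dif_neg hmem]
      simp
  -- reindex the sum from boxFinset νp to boxFinset ν
  have hreindex : ∑ x ∈ (boxFinset νp).attach, F x.1 = ∑ x ∈ (boxFinset ν).attach, F x.1 := by
    rw [Finset.sum_attach _ F, Finset.sum_attach _ F]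
    have h1 : ∀ lam ∈ boxFinset νp, lam ∉ boxFinset νp ∩ boxFinset ν → F lam = 0 := by
      intro lam hlam hnot
      have : lam ∉ boxFinset ν := fun hc => hnot (Finset.mem_inter.mpr ⟨hlam, hc⟩)
      simp [hF, this]
    have h2 : ∀ lam ∈ boxFinset ν, lam ∉ boxFinset νp ∩ boxFinset ν → F lam = 0 := by
      intro lam hlam hnot
      have : lam ∉ boxFinset νp := fun hc => hnot (Finset.mem_inter.mpr ⟨hc, hlam⟩)
      simp [hF, this]
    rw [← Finset.sum_subset Finset.inter_subset_left h1,
      ← Finset.sum_subset Finset.inter_subset_right h2]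
  -- now assemble
  refine ⟨fun lam => if lam ∈ boxFinset νp then β * c' lam else 0, Enew, hEnewMem, ?_⟩
  have hsum_eq : ∑ x ∈ (boxFinset ν).attach,
      (if x.1 ∈ boxFinset νp then β * c' x.1 else 0) •
        ((pathOp T (P x.1 x.2)).comp
          ((Δ x.1 ^ (m + 1 - (mdist ν x.1).toNat - 1)).comp
            (revPathOp T (P x.1 x.2))))
      = β • ∑ x ∈ (boxFinset ν).attach, F x.1 := by
    rw [Finset.smul_sum]
    refine Finset.sum_congr rfl ?_
    rintro x -
    simp only [hF]
    rw [dif_pos x.2, smul_smul, mul_ite, mul_zero]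
  rw [hsum_eq]
  calc β • ((T ν νp).comp ((Δ νp ^ m).comp (T νp ν)))
      = β • ((T ν νp).comp ((((R νp).comp (M'.comp (R νp))) + E').comp (T νp ν))) := by
        rw [heq]
    _ = β • ((T ν νp).comp (((R νp).comp (M'.comp (R νp))).comp (T νp ν))) + Enew := by
        rw [LinearMap.add_comp, LinearMap.comp_add, smul_add, hEnew, LinearMap.comp_assoc]
    _ = β • ((R ν).comp (((T ν νp).comp (M'.comp (T νp ν))).comp (R ν))) + Enew := by
        rw [hmain]
    _ = (R ν).comp ((β • ((T ν νp).comp (M'.comp (T νp ν)))).comp (R ν)) + Enew := by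
        rw [LinearMap.smul_comp, LinearMap.comp_smul]
    _ = (R ν).comp ((β • ∑ x ∈ (boxFinset ν).attach, F x.1).comp (R ν)) + Enew := by
        rw [hTMT, hreindex]

end F
section G
variable {n : ℕ} {V : (Fin n → ℤ) → Type*}
  [∀ lam, AddCommGroup (V lam)] [∀ lam, Module ℂ (V lam)]

lemma sum_at_self (hn : 0 < n) (T : ∀ μ lam : Fin n → ℤ, V lam →ₗ[ℂ] V μ)
    (Δ : ∀ lam : Fin n → ℤ, Module.End ℂ (V lam))
    (hindep : ∀ ν μ : Fin n → ℤ, ∀ P₁ P₂ : WPath n ν μ,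
      pathOp T P₁ = pathOp T P₂ ∧ revPathOp T P₁ = revPathOp T P₂)
    (ν : Fin n → ℤ) (hν : DomInt ν) (m : ℕ) (γ : ℂ)
    (P : (lam : Fin n → ℤ) → lam ∈ boxFinset ν → WPath n lam ν) :
    ∑ x ∈ (boxFinset ν).attach,
      (if x.1 = ν then γ else 0) • ((pathOp T (P x.1 x.2)).comp
        ((Δ x.1 ^ (m - (mdist ν x.1).toNat - 1)).comp (revPathOp T (P x.1 x.2))))
      = γ • (Δ ν ^ (m - 1)) := by
  have hself : ν ∈ boxFinset ν := self_mem_boxFinset hν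
  rw [Finset.sum_eq_single (⟨ν, hself⟩ : {x // x ∈ boxFinset ν})]
  · have h1 : pathOp T (P ν hself) = LinearMap.id :=
      (hindep ν ν (P ν hself) (WPath.triv hn ν hν)).1.trans (pathOp_triv T hn ν hν)
    have h2 : revPathOp T (P ν hself) = LinearMap.id :=
      (hindep ν ν (P ν hself) (WPath.triv hn ν hν)).2.trans (revPathOp_triv T hn ν hν)
    simp only [if_pos rfl]
    rw [h1, h2, mdist_self]
    simp
  · rintro ⟨lam, hlam⟩ - hne
    have : lam ≠ ν := fun hc => hne (Subtype.ext hc)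
    rw [if_neg this, zero_smul]
  · intro hc
    exact absurd (Finset.mem_attach _ _) hc

theorem keyLemma (hn : 0 < n)
    (T : ∀ μ lam : Fin n → ℤ, V lam →ₗ[ℂ] V μ)
    (R : ∀ lam : Fin n → ℤ, Module.End ℂ (V lam))
    (Δ : ∀ lam : Fin n → ℤ, Module.End ℂ (V lam))
    (hT0 : ∀ μ lam : Fin n → ℤ, ¬(DomInt μ ∧ DomInt lam) → T μ lam = 0)
    (a : (Fin n → ℤ) → ℂ) (b : (Fin n → ℤ) → Fin n → ℂ)
    (hfact : ∀ lam : Fin n → ℤ, DomInt lam →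
      Δ lam = a lam • ((R lam).comp (R lam)) +
        ∑ p : Fin n, b lam p •
          (T lam (lam - Pi.single p 1)).comp (T (lam - Pi.single p 1) lam))
    (hanti : ∀ μ lam : Fin n → ℤ, mdist μ lam = 1 →
      (T μ lam).comp (R lam) + (R μ).comp (T μ lam) = 0)
    (hΔT : ∀ μ lam : Fin n → ℤ, mdist μ lam = 1 →
      (Δ μ).comp (T μ lam) = (T μ lam).comp (Δ lam))
    (hΔR : ∀ lam : Fin n → ℤ, (Δ lam).comp (R lam) = (R lam).comp (Δ lam))
    (hvanish : ∀ lam μ : Fin n → ℤ, DomInt lam → DomInt μ →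
      (∀ i, lam i ≤ μ i) → lam ≠ μ → ¬ InBox μ lam →
      ∀ P : WPath n lam μ, pathOp T P = 0 ∧ revPathOp T P = 0)
    (hindep : ∀ ν μ : Fin n → ℤ, ∀ P₁ P₂ : WPath n ν μ,
      pathOp T P₁ = pathOp T P₂ ∧ revPathOp T P₁ = revPathOp T P₂) :
    ∀ (m : ℕ), 1 ≤ m → ∀ ν : Fin n → ℤ, DomInt ν →
    ∃ (c : (Fin n → ℤ) → ℂ)
      (P : (lam : Fin n → ℤ) → lam ∈ boxFinset ν → WPath n lam ν)
      (E : Module.End ℂ (V ν)),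
      E ∈ Submodule.span ℂ (errSet T ν m) ∧
      Δ ν ^ m =
        (R ν).comp
          ((∑ x ∈ (boxFinset ν).attach,
            c x.1 • ((pathOp T (P x.1 x.2)).comp
              ((Δ x.1 ^ (m - (mdist ν x.1).toNat - 1)).comp
                (revPathOp T (P x.1 x.2))))).comp (R ν)) + E := by
  intro m hm
  induction m, hm using Nat.le_induction with
  | base =>
      intro ν hν
      have Pc : (lam : Fin n → ℤ) → lam ∈ boxFinset ν → WPath n lam ν := fun lam h =>
        Classical.choice (exists_path hn (mem_boxFinset_iff.mp h).1 hν
          (fun i => ((mem_boxFinset_iff.mp h).2 i).2))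
      refine ⟨fun lam => if lam = ν then a ν else 0, Pc,
        ∑ p : Fin n, b ν p • ((T ν (ν - Pi.single p 1)).comp (T (ν - Pi.single p 1) ν)),
        ?_, ?_⟩
      · refine Submodule.sum_mem _ (fun p _ => ?_)
        by_cases hp : DomInt (ν - Pi.single p 1)
        · refine Submodule.smul_mem _ _ (Submodule.subset_span ?_)
          have hstep : ν = (ν - Pi.single p 1) + Pi.single p 1 := by ring
          refine ⟨ν - Pi.single p 1, (WPath.triv hn _ hp).ext p hstep hν, hp, ?_, ?_, ?_⟩
          · intro i
            have : (ν - Pi.single p 1 : Fin n → ℤ) i = ν i - (if i = p then 1 else 0) := by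
              simp [Pi.single_apply]
            rw [this]; split <;> omega
          · rw [mdist_sub_single]; norm_num
          · rw [pathOp_ext T _ p hstep hν, revPathOp_ext T _ p hstep hν,
              pathOp_triv T hn _ hp, revPathOp_triv T hn _ hp,
              LinearMap.comp_id, LinearMap.id_comp]
        · rw [hT0 ν (ν - Pi.single p 1) (fun hc => hp hc.2), LinearMap.zero_comp, smul_zero]
          exact Submodule.zero_mem _
      · rw [pow_one, hfact ν hν]
        congr 1
        rw [sum_at_self hn T Δ hindep ν hν 1 (a ν) Pc]
        ext v
        simp
  | succ m hm ih =>
      intro ν hν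
      have Pc : (lam : Fin n → ℤ) → lam ∈ boxFinset ν → WPath n lam ν := fun lam h =>
        Classical.choice (exists_path hn (mem_boxFinset_iff.mp h).1 hν
          (fun i => ((mem_boxFinset_iff.mp h).2 i).2))
      have hstep_all := fun p : Fin n =>
        stepTerm T R Δ hT0 hanti hvanish hindep ν hν p m (b ν p) Pc
          (fun hp => ih (ν - Pi.single p 1) hp)
      choose f E hmem heqs using hstep_all
      refine ⟨fun lam => (if lam = ν then a ν else 0) + ∑ p : Fin n, f p lam, Pc,
        ∑ p : Fin n, E p, Submodule.sum_mem _ (fun p _ => hmem p), ?_⟩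
      -- abbreviation
      set G : {x // x ∈ boxFinset ν} → Module.End ℂ (V ν) := fun x =>
        (pathOp T (Pc x.1 x.2)).comp
          ((Δ x.1 ^ (m + 1 - (mdist ν x.1).toNat - 1)).comp
            (revPathOp T (Pc x.1 x.2))) with hG
      -- first expansion
      have h1 : Δ ν ^ (m + 1)
          = a ν • ((Δ ν ^ m).comp ((R ν).comp (R ν)))
            + ∑ p : Fin n, b ν p • ((Δ ν ^ m).comp
                ((T ν (ν - Pi.single p 1)).comp (T (ν - Pi.single p 1) ν))) := by
        rw [pow_succ, Module.End.mul_eq_comp, hfact ν hν, LinearMap.comp_add,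
          LinearMap.comp_smul, comp_sum_eq]
        congr 1
        refine Finset.sum_congr rfl (fun p _ => ?_)
        rw [LinearMap.comp_smul]
      -- commute the power past R and T
      have h2 : (Δ ν ^ m).comp ((R ν).comp (R ν)) = (R ν).comp ((Δ ν ^ m).comp (R ν)) := by
        calc (Δ ν ^ m).comp ((R ν).comp (R ν))
            = ((Δ ν ^ m).comp (R ν)).comp (R ν) := by rw [LinearMap.comp_assoc]
          _ = ((R ν).comp (Δ ν ^ m)).comp (R ν) := by
              rw [pow_comp_comm (Δ ν) (R ν) (hΔR ν) m]
          _ = (R ν).comp ((Δ ν ^ m).comp (R ν)) := by rw [LinearMap.comp_assoc]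
      have h3 : ∀ p : Fin n, (Δ ν ^ m).comp
          ((T ν (ν - Pi.single p 1)).comp (T (ν - Pi.single p 1) ν))
          = (T ν (ν - Pi.single p 1)).comp
            ((Δ (ν - Pi.single p 1) ^ m).comp (T (ν - Pi.single p 1) ν)) := by
        intro p
        rw [← LinearMap.comp_assoc,
          pow_comp_T (Δ ν) (Δ (ν - Pi.single p 1)) (T ν (ν - Pi.single p 1))
            (hΔT ν (ν - Pi.single p 1) (mdist_sub_single ν p)) m,
          LinearMap.comp_assoc]
      rw [h1, h2]
      rw [Finset.sum_congr rfl (fun p _ => by rw [h3 p])]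
      rw [Finset.sum_congr rfl (fun p _ => heqs p)]
      rw [Finset.sum_add_distrib]
      -- push everything inside R ∘ (— ∘ R)
      have h4 : ∑ p : Fin n, (R ν).comp
          ((∑ x ∈ (boxFinset ν).attach, f p x.1 • G x).comp (R ν))
          = (R ν).comp ((∑ x ∈ (boxFinset ν).attach,
              (∑ p : Fin n, f p x.1) • G x).comp (R ν)) := by
        rw [← comp_sum_eq, ← sum_comp_eq]
        congr 2
        rw [Finset.sum_comm]
        refine Finset.sum_congr rfl (fun x _ => ?_)
        rw [Finset.sum_smul]
      have h5 : a ν • ((R ν).comp ((Δ ν ^ m).comp (R ν)))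
          = (R ν).comp ((∑ x ∈ (boxFinset ν).attach,
              (if x.1 = ν then a ν else 0) • G x).comp (R ν)) := by
        rw [hG, sum_at_self hn T Δ hindep ν hν (m + 1) (a ν) Pc]
        have : m + 1 - 1 = m := rfl
        rw [this, LinearMap.smul_comp, LinearMap.comp_smul]
      rw [h4, h5]
      rw [← add_assoc, ← LinearMap.comp_add, ← LinearMap.add_comp,
        ← Finset.sum_add_distrib]
      congr 3
      refine Finset.sum_congr rfl (fun x _ => ?_)
      rw [add_smul]

end G
/-- Factorization of powers of the Laplace operator (abstract form): under the
hypotheses (a)–(e), for every dominant integral `μ` and every `n₀ > μ_1` there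
are constants `c(μ,λ)` and path operators `P_{μλ}`, `P_{λμ}` (along some paths)
such that `Δ_μ^{n₀} = R_μ ∘ [∑_{λ ∈ B(μ)} c(μ,λ) P_{μλ} Δ_λ^{n₀-|μ,λ|-1} P_{λμ}] ∘ R_μ`. -/
theorem laplace_power_factorization {n : ℕ} (hn : 0 < n)
    {V : (Fin n → ℤ) → Type*} [∀ lam, AddCommGroup (V lam)]
    [∀ lam, Module ℂ (V lam)]
    (T : ∀ μ lam : Fin n → ℤ, V lam →ₗ[ℂ] V μ)
    (R : ∀ lam : Fin n → ℤ, Module.End ℂ (V lam))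
    (Δ : ∀ lam : Fin n → ℤ, Module.End ℂ (V lam))
    (hT0 : ∀ μ lam : Fin n → ℤ, ¬(DomInt μ ∧ DomInt lam) → T μ lam = 0)
    (hR0 : ∀ lam : Fin n → ℤ, ¬ DomInt lam → R lam = 0)
    -- (a) splitting of the Laplace operator
    (a : (Fin n → ℤ) → ℂ) (b : (Fin n → ℤ) → Fin n → ℂ)
    (ha : ∀ lam : Fin n → ℤ, DomInt lam → a lam ≠ 0)
    (hfact : ∀ lam : Fin n → ℤ, DomInt lam →
      Δ lam = a lam • ((R lam).comp (R lam)) +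
        ∑ p : Fin n, b lam p •
          (T lam (lam - Pi.single p 1)).comp (T (lam - Pi.single p 1) lam))
    -- (b) anticommutation of T and R
    (hanti : ∀ μ lam : Fin n → ℤ, mdist μ lam = 1 →
      (T μ lam).comp (R lam) + (R μ).comp (T μ lam) = 0)
    -- (c) the Laplace operators commute with T and R
    (hΔT : ∀ μ lam : Fin n → ℤ, mdist μ lam = 1 →
      (Δ μ).comp (T μ lam) = (T μ lam).comp (Δ lam))
    (hΔR : ∀ lam : Fin n → ℤ, (Δ lam).comp (R lam) = (R lam).comp (Δ lam))
    -- (d) path operators to and from weights outside the box vanish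
    (hvanish : ∀ lam μ : Fin n → ℤ, DomInt lam → DomInt μ →
      (∀ i, lam i ≤ μ i) → lam ≠ μ → ¬ InBox μ lam →
      ∀ P : WPath n lam μ, pathOp T P = 0 ∧ revPathOp T P = 0)
    -- (e) path operators do not depend on the chosen path
    (hindep : ∀ ν μ : Fin n → ℤ, ∀ P₁ P₂ : WPath n ν μ,
      pathOp T P₁ = pathOp T P₂ ∧ revPathOp T P₁ = revPathOp T P₂)
    (μ : Fin n → ℤ) (hμ : DomInt μ) (n₀ : ℕ) (hn₀ : μ ⟨0, hn⟩ < (n₀ : ℤ)) :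
    ∃ (c : (Fin n → ℤ) → ℂ)
      (P : (lam : Fin n → ℤ) → lam ∈ boxFinset μ → WPath n lam μ),
      Δ μ ^ n₀ =
        (R μ).comp
          ((∑ x ∈ (boxFinset μ).attach,
            c x.1 • ((pathOp T (P x.1 x.2)).comp
              (((Δ x.1) ^ (n₀ - (mdist μ x.1).toNat - 1)).comp
                (revPathOp T (P x.1 x.2))))).comp (R μ)) := by
  have hm : 1 ≤ n₀ := by
    have h0 := hμ.2 ⟨0, hn⟩
    omega
  obtain ⟨c, P, E, hE, heq⟩ :=
    keyLemma hn T R Δ hT0 a b hfact hanti hΔT hΔR hvanish hindep n₀ hm μ hμ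
  have hE0 : E = 0 := by
    have hsub : errSet T μ n₀ ⊆ (⊥ : Submodule ℂ (Module.End ℂ (V μ))) := by
      rintro g ⟨lam, Q, hdom, hle, hd, rfl⟩
      have hlamne : lam ≠ μ := by
        intro hc
        subst hc
        rw [mdist_self] at hd
        omega
      have hnotbox : ¬ InBox μ lam := by
        intro hin
        have h1 := mdist_le_head hn hμ hin
        rw [hd] at h1
        omega
      have hv := hvanish lam μ hdom hμ hle hlamne hnotbox Q
      rw [SetLike.mem_coe, Submodule.mem_bot, hv.1, LinearMap.zero_comp]
    have hle2 : Submodule.span ℂ (errSet T μ n₀) ≤ ⊥ := Submodule.span_le.mpr hsub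
    simpa using hle2 hE
  rw [hE0, add_zero] at heq
  exact ⟨c, P, heq⟩
end

section
/- Polyharmonicity (abstract corollary): under the hypotheses (a)–(e) of the abstract factorization theorem, for every dominant integral weight μ and every v ∈ V_μ with R_μ v = 0 one has Δ_μ^{ μ_1 + 1} v = 0. -/
section PolyAux

variable {n : ℕ} {V : (Fin n → ℤ) → Type*}
  [∀ lam, AddCommGroup (V lam)] [∀ lam, Module ℂ (V lam)]

/-- The weight reached from `μ` by going down the steps of a word. -/
def wTgt (μ : Fin n → ℤ) : List (Fin n) → (Fin n → ℤ)
  | [] => μ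
  | i :: w => wTgt μ w - Pi.single i 1

/-- Downward operator along a word. -/
def wDown (T : ∀ μ lam : Fin n → ℤ, V lam →ₗ[ℂ] V μ) (μ : Fin n → ℤ) :
    (w : List (Fin n)) → (V μ →ₗ[ℂ] V (wTgt μ w))
  | [] => LinearMap.id
  | i :: w => (T (wTgt μ (i :: w)) (wTgt μ w)).comp (wDown T μ w)

/-- Upward operator along a word. -/
def wUp (T : ∀ μ lam : Fin n → ℤ, V lam →ₗ[ℂ] V μ) (μ : Fin n → ℤ) :
    (w : List (Fin n)) → (V (wTgt μ w) →ₗ[ℂ] V μ)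
  | [] => LinearMap.id
  | i :: w => (wUp T μ w).comp (T (wTgt μ w) (wTgt μ (i :: w)))

lemma sum_abs_single (p : Fin n) : ∑ i : Fin n, |((Pi.single p 1 : Fin n → ℤ)) i| = 1 := by
  classical
  have h : ∀ i : Fin n, |((Pi.single p 1 : Fin n → ℤ)) i| = ((Pi.single p 1 : Fin n → ℤ)) i := by
    intro i
    rw [Pi.single_apply]
    split <;> simp
  rw [Finset.sum_congr rfl (fun i _ => h i), Finset.sum_pi_single']
  simp

lemma mdist_down (lam : Fin n → ℤ) (p : Fin n) :
    mdist (lam - (Pi.single p 1 : Fin n → ℤ)) lam = 1 := by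
  unfold mdist
  have h : ∀ i : Fin n, |(lam - (Pi.single p 1 : Fin n → ℤ)) i - lam i| = |((Pi.single p 1 : Fin n → ℤ)) i| := by
    intro i
    rw [Pi.sub_apply, show lam i - (Pi.single p 1 : Fin n → ℤ) i - lam i = -((Pi.single p 1 : Fin n → ℤ) i) by ring,
      abs_neg]
  rw [Finset.sum_congr rfl (fun i _ => h i), sum_abs_single]

lemma mdist_up (lam : Fin n → ℤ) (p : Fin n) :
    mdist lam (lam - (Pi.single p 1 : Fin n → ℤ)) = 1 := by
  unfold mdist
  have h : ∀ i : Fin n, |lam i - (lam - (Pi.single p 1 : Fin n → ℤ)) i| = |((Pi.single p 1 : Fin n → ℤ)) i| := by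
    intro i
    rw [Pi.sub_apply, show lam i - (lam i - (Pi.single p 1 : Fin n → ℤ) i) = (Pi.single p 1 : Fin n → ℤ) i by ring]
  rw [Finset.sum_congr rfl (fun i _ => h i), sum_abs_single]

lemma single_nonneg (p i : Fin n) : 0 ≤ ((Pi.single p 1 : Fin n → ℤ)) i := by
  rw [Pi.single_apply]; split <;> norm_num

lemma wTgt_le (μ : Fin n → ℤ) : ∀ (w : List (Fin n)) (i : Fin n), wTgt μ w i ≤ μ i
  | [], i => le_refl _
  | j :: w, i => by
      have h1 := wTgt_le μ w i
      have h2 := single_nonneg j i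
      show wTgt μ w i - (Pi.single j 1 : Fin n → ℤ) i ≤ μ i
      omega

lemma sum_wTgt (μ : Fin n → ℤ) :
    ∀ w : List (Fin n), ∑ i : Fin n, (μ i - wTgt μ w i) = (w.length : ℤ)
  | [] => by simp [wTgt]
  | j :: w => by
      have ih := sum_wTgt μ w
      have h : ∀ i : Fin n,
          μ i - wTgt μ (j :: w) i = (μ i - wTgt μ w i) + (Pi.single j 1 : Fin n → ℤ) i := by
        intro i
        show μ i - (wTgt μ w i - (Pi.single j 1 : Fin n → ℤ) i) = _
        ring
      rw [Finset.sum_congr rfl (fun i _ => h i), Finset.sum_add_distrib, ih,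
        Finset.sum_pi_single']
      simp

lemma sum_boxNext (hn : 0 < n) (μ : Fin n → ℤ) :
    ∑ i : Fin n, (μ i - boxNext μ i) = μ ⟨0, hn⟩ := by
  set f : ℕ → ℤ := fun k => if h : k < n then μ ⟨k, h⟩ else 0 with hf
  have h1 : ∀ i : Fin n, μ i - boxNext μ i = f i - f (i + 1) := by
    intro i
    have : μ i = f i := by simp [hf, i.isLt]
    rw [this]
    rfl
  rw [Finset.sum_congr rfl (fun i _ => h1 i), Fin.sum_univ_eq_sum_range (fun k => f k - f (k+1)),
    Finset.sum_range_sub' f n]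
  simp [hf, hn, lt_irrefl]

lemma R_wDown (T : ∀ μ lam : Fin n → ℤ, V lam →ₗ[ℂ] V μ)
    (R : ∀ lam : Fin n → ℤ, Module.End ℂ (V lam))
    (hanti : ∀ μ lam : Fin n → ℤ, mdist μ lam = 1 →
      (T μ lam).comp (R lam) + (R μ).comp (T μ lam) = 0)
    (μ : Fin n → ℤ) (v : V μ) (hv : R μ v = 0) :
    ∀ w : List (Fin n), R (wTgt μ w) (wDown T μ w v) = 0
  | [] => hv
  | j :: w => by
      have ih := R_wDown T R hanti μ v hv w
      have h := LinearMap.congr_fun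
        (hanti (wTgt μ w - Pi.single j 1) (wTgt μ w) (mdist_down _ j)) (wDown T μ w v)
      simp only [LinearMap.add_apply, LinearMap.comp_apply, LinearMap.zero_apply] at h
      rw [ih, map_zero, zero_add] at h
      exact h

lemma Δ_wUp (T : ∀ μ lam : Fin n → ℤ, V lam →ₗ[ℂ] V μ)
    (Δ : ∀ lam : Fin n → ℤ, Module.End ℂ (V lam))
    (hΔT : ∀ μ lam : Fin n → ℤ, mdist μ lam = 1 →
      (Δ μ).comp (T μ lam) = (T μ lam).comp (Δ lam))
    (μ : Fin n → ℤ) :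
    ∀ (w : List (Fin n)) (x : V (wTgt μ w)), Δ μ (wUp T μ w x) = wUp T μ w (Δ (wTgt μ w) x)
  | [], x => rfl
  | j :: w, x => by
      have ih := Δ_wUp T Δ hΔT μ w (T (wTgt μ w) (wTgt μ w - Pi.single j 1) x)
      have h := LinearMap.congr_fun
        (hΔT (wTgt μ w) (wTgt μ w - Pi.single j 1) (mdist_up _ j)) x
      change Δ (wTgt μ w) (T (wTgt μ w) (wTgt μ w - Pi.single j 1) x) =
        T (wTgt μ w) (wTgt μ w - Pi.single j 1) (Δ (wTgt μ w - Pi.single j 1) x) at h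
      show Δ μ (wUp T μ w (T (wTgt μ w) (wTgt μ w - Pi.single j 1) x)) =
        wUp T μ w (T (wTgt μ w) (wTgt μ w - Pi.single j 1) (Δ (wTgt μ w - Pi.single j 1) x))
      rw [ih, h]

lemma wDown_zero (T : ∀ μ lam : Fin n → ℤ, V lam →ₗ[ℂ] V μ)
    (hT0 : ∀ μ lam : Fin n → ℤ, ¬(DomInt μ ∧ DomInt lam) → T μ lam = 0)
    (μ : Fin n → ℤ) (hμ : DomInt μ) :
    ∀ w : List (Fin n), (∃ p, ¬ DomInt (wTgt μ (w.drop p))) → wDown T μ w = 0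
  | [], ⟨p, hp⟩ => absurd hμ (by simpa [wTgt] using hp)
  | j :: w, ⟨p, hp⟩ => by
      by_cases hd : DomInt (wTgt μ (j :: w))
      · have hw : ∃ q, ¬ DomInt (wTgt μ (w.drop q)) := by
          cases p with
          | zero => exact absurd hd hp
          | succ q => exact ⟨q, hp⟩
        show (T (wTgt μ (j :: w)) (wTgt μ w)).comp (wDown T μ w) = 0
        rw [wDown_zero T hT0 μ hμ w hw, LinearMap.comp_zero]
      · show (T (wTgt μ (j :: w)) (wTgt μ w)).comp (wDown T μ w) = 0
        rw [hT0 _ _ (fun hc => hd hc.1), LinearMap.zero_comp]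

lemma lcast_lcast_s14 {a b : Fin n → ℤ} (h : a = b) (x : V a) :
    lcast (V := V) h.symm (lcast (V := V) h x) = x := by subst h; rfl

lemma pathOpAux_shift (T : ∀ μ lam : Fin n → ℤ, V lam →ₗ[ℂ] V μ) (seq : ℕ → Fin n → ℤ) :
    ∀ N : ℕ, pathOpAux T seq (N + 1) =
      (pathOpAux (V := V) T (fun p => seq (p + 1)) N).comp (T (seq 1) (seq 0))
  | 0 => by ext x; rfl
  | N + 1 => by
      have ih := pathOpAux_shift T seq N
      show (T (seq (N + 2)) (seq (N + 1))).comp (pathOpAux T seq (N + 1)) =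
        ((T (seq (N + 2)) (seq (N + 1))).comp
          (pathOpAux (V := V) T (fun p => seq (p + 1)) N)).comp (T (seq 1) (seq 0))
      rw [ih, LinearMap.comp_assoc]

lemma wUp_eq_pathOpAux (T : ∀ μ lam : Fin n → ℤ, V lam →ₗ[ℂ] V μ) (μ : Fin n → ℤ) :
    ∀ (w : List (Fin n)) (h : wTgt μ (w.drop w.length) = μ),
      (lcast (V := V) h).comp (pathOpAux T (fun p => wTgt μ (w.drop p)) w.length) = wUp T μ w
  | [], h => by ext x; exact lcast_lcast_s14 (V := V) rfl x
  | j :: w, h => by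
      have ih := wUp_eq_pathOpAux T μ w h
      show (lcast (V := V) h).comp
          (pathOpAux T (fun p => wTgt μ ((j :: w).drop p)) (w.length + 1)) =
        (wUp T μ w).comp (T (wTgt μ w) (wTgt μ (j :: w)))
      rw [pathOpAux_shift, ← LinearMap.comp_assoc]
      exact congrArg (fun f => LinearMap.comp f (T (wTgt μ w) (wTgt μ (j :: w)))) ih

lemma wUp_zero (hn : 0 < n) (T : ∀ μ lam : Fin n → ℤ, V lam →ₗ[ℂ] V μ) (μ : Fin n → ℤ)
    (w : List (Fin n)) (hall : ∀ p, DomInt (wTgt μ (w.drop p)))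
    (hv0 : ∀ P : WPath n (wTgt μ w) μ, pathOp T P = 0) :
    wUp T μ w = 0 := by
  have hlast : wTgt μ (List.drop w.length w) = μ := by rw [List.drop_length]; rfl
  have hstep : ∀ p, 1 ≤ p → p ≤ w.length →
      wTgt μ (w.drop p) = wTgt μ (w.drop (p - 1)) +
        Pi.single (if h : p - 1 < w.length then w.get ⟨p - 1, h⟩ else ⟨0, hn⟩) 1 := by
    intro p hp1 hpN
    cases p with
    | zero => omega
    | succ q =>
      have hq : q < w.length := by omega
      simp only [Nat.add_sub_cancel]
      rw [dif_pos hq]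
      have hd : w.drop q = w.get ⟨q, hq⟩ :: w.drop (q + 1) := by
        rw [List.get_eq_getElem]
        exact List.drop_eq_getElem_cons hq
      rw [hd]
      show wTgt μ (w.drop (q + 1)) =
        (wTgt μ (w.drop (q + 1)) - Pi.single (w.get ⟨q, hq⟩) 1) + Pi.single (w.get ⟨q, hq⟩) 1
      rw [sub_add_cancel]
  let P : WPath n (wTgt μ w) μ :=
    ⟨w.length, fun p => wTgt μ (w.drop p),
      fun p => if h : p - 1 < w.length then w.get ⟨p - 1, h⟩ else ⟨0, hn⟩,
      rfl, hlast, fun p _ => hall p, hstep⟩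
  ext x
  have h0 : pathOp T P x = 0 := by rw [hv0 P]; rfl
  have h1 : lcast (V := V) hlast
      (pathOpAux T (fun p => wTgt μ (w.drop p)) w.length x) = 0 := h0
  calc wUp T μ w x
      = (lcast (V := V) hlast).comp
          (pathOpAux T (fun p => wTgt μ (w.drop p)) w.length) x :=
        (LinearMap.congr_fun (wUp_eq_pathOpAux T μ w hlast) x).symm
    _ = 0 := h1
  
end PolyAux

/-- Polyharmonicity (abstract corollary): under the hypotheses (a)–(e) of the
abstract factorization theorem, every `v ∈ V_μ` with `R_μ v = 0` satisfies
`Δ_μ^{μ_1 + 1} v = 0`. -/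
theorem polyharmonic_of_RS {n : ℕ} (hn : 0 < n)
    {V : (Fin n → ℤ) → Type*} [∀ lam, AddCommGroup (V lam)]
    [∀ lam, Module ℂ (V lam)]
    (T : ∀ μ lam : Fin n → ℤ, V lam →ₗ[ℂ] V μ)
    (R : ∀ lam : Fin n → ℤ, Module.End ℂ (V lam))
    (Δ : ∀ lam : Fin n → ℤ, Module.End ℂ (V lam))
    (hT0 : ∀ μ lam : Fin n → ℤ, ¬(DomInt μ ∧ DomInt lam) → T μ lam = 0)
    (hR0 : ∀ lam : Fin n → ℤ, ¬ DomInt lam → R lam = 0)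
    -- (a) splitting of the Laplace operator
    (a : (Fin n → ℤ) → ℂ) (b : (Fin n → ℤ) → Fin n → ℂ)
    (ha : ∀ lam : Fin n → ℤ, DomInt lam → a lam ≠ 0)
    (hfact : ∀ lam : Fin n → ℤ, DomInt lam →
      Δ lam = a lam • ((R lam).comp (R lam)) +
        ∑ p : Fin n, b lam p •
          (T lam (lam - Pi.single p 1)).comp (T (lam - Pi.single p 1) lam))
    -- (b) anticommutation of T and R
    (hanti : ∀ μ lam : Fin n → ℤ, mdist μ lam = 1 →
      (T μ lam).comp (R lam) + (R μ).comp (T μ lam) = 0)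
    -- (c) the Laplace operators commute with T and R
    (hΔT : ∀ μ lam : Fin n → ℤ, mdist μ lam = 1 →
      (Δ μ).comp (T μ lam) = (T μ lam).comp (Δ lam))
    (hΔR : ∀ lam : Fin n → ℤ, (Δ lam).comp (R lam) = (R lam).comp (Δ lam))
    -- (d) path operators to and from weights outside the box vanish
    (hvanish : ∀ lam μ : Fin n → ℤ, DomInt lam → DomInt μ →
      (∀ i, lam i ≤ μ i) → lam ≠ μ → ¬ InBox μ lam →
      ∀ P : WPath n lam μ, pathOp T P = 0 ∧ revPathOp T P = 0)
    -- (e) path operators do not depend on the chosen path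
    (hindep : ∀ ν μ : Fin n → ℤ, ∀ P₁ P₂ : WPath n ν μ,
      pathOp T P₁ = pathOp T P₂ ∧ revPathOp T P₁ = revPathOp T P₂)
    (μ : Fin n → ℤ) (hμ : DomInt μ) (v : V μ) (hv : R μ v = 0) :
    (Δ μ ^ ((μ ⟨0, hn⟩).toNat + 1)) v = 0 := by
  classical
  have hmain : ∀ m, (Δ μ ^ m) v ∈ Submodule.span ℂ
      {x : V μ | ∃ w : List (Fin n), w.length = m ∧ x = wUp T μ w (wDown T μ w v)} := by
    intro m
    induction m with
    | zero =>
      rw [pow_zero]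
      exact Submodule.subset_span ⟨[], rfl, rfl⟩
    | succ m ih =>
      rw [pow_succ', Module.End.mul_apply]
      have hstep : Submodule.span ℂ
          {x : V μ | ∃ w : List (Fin n), w.length = m ∧ x = wUp T μ w (wDown T μ w v)} ≤
          (Submodule.span ℂ
            {x : V μ | ∃ w : List (Fin n), w.length = m + 1 ∧
              x = wUp T μ w (wDown T μ w v)}).comap (Δ μ) := by
        rw [Submodule.span_le]
        rintro x ⟨w, hw, rfl⟩
        simp only [SetLike.mem_coe, Submodule.mem_comap]
        by_cases hdom : DomInt (wTgt μ w)
        · rw [Δ_wUp T Δ hΔT μ w (wDown T μ w v)]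
          have hy : R (wTgt μ w) (wDown T μ w v) = 0 := R_wDown T R hanti μ v hv w
          rw [hfact _ hdom]
          simp only [LinearMap.add_apply, LinearMap.smul_apply, LinearMap.sum_apply,
            LinearMap.comp_apply, hy, map_zero, smul_zero, zero_add, map_sum, map_smul]
          refine Submodule.sum_mem _ fun p _ =>
            Submodule.smul_mem _ _ (Submodule.subset_span ⟨p :: w, by simp [hw], rfl⟩)
        · cases w with
          | nil => exact absurd hμ hdom
          | cons j w' =>
            have h0 : wDown T μ (j :: w') = 0 := wDown_zero T hT0 μ hμ _ ⟨0, hdom⟩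
            rw [h0]
            simp
      exact Submodule.mem_comap.mp (hstep ih)
  have hzero : ∀ x ∈ {x : V μ | ∃ w : List (Fin n),
      w.length = (μ ⟨0, hn⟩).toNat + 1 ∧ x = wUp T μ w (wDown T μ w v)}, x = 0 := by
    rintro x ⟨w, hw, rfl⟩
    by_cases hall : ∀ p, DomInt (wTgt μ (w.drop p))
    · have hle : ∀ i, wTgt μ w i ≤ μ i := wTgt_le μ w
      have hne : wTgt μ w ≠ μ := by
        intro h
        have hs := sum_wTgt μ w
        rw [h] at hs
        simp at hs
        omega
      have hnb : ¬ InBox μ (wTgt μ w) := by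
        intro hbox
        have h1 : ∑ i : Fin n, (μ i - wTgt μ w i) ≤ ∑ i : Fin n, (μ i - boxNext μ i) :=
          Finset.sum_le_sum fun i _ => by have := (hbox.2 i).1; omega
        rw [sum_wTgt, sum_boxNext hn, hw] at h1
        have h2 : (0:ℤ) ≤ μ ⟨0, hn⟩ := hμ.2 _
        push_cast at h1
        omega
      have hU : wUp T μ w = 0 :=
        wUp_zero hn T μ w hall (fun P => (hvanish _ _ (hall 0) hμ hle hne hnb P).1)
      rw [hU]
      simp
    · push_neg at hall
      rw [wDown_zero T hT0 μ hμ w hall]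
      simp
  have hbot : Submodule.span ℂ {x : V μ | ∃ w : List (Fin n),
      w.length = (μ ⟨0, hn⟩).toNat + 1 ∧ x = wUp T μ w (wDown T μ w v)} = ⊥ :=
    Submodule.span_eq_bot.mpr hzero
  have := hmain ((μ ⟨0, hn⟩).toNat + 1)
  rw [hbot, Submodule.mem_bot] at this
  exact this
end
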